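/- arXiv:2601.17187 — 5 statements merged into one kernel-verified Lean document; each statement's English description precedes it below -/
import Mathlib

section
/- (Zador's lower bound.) Let Λ ⊂ ℝⁿ be a full-rank lattice (a discrete subgroup spanning ℝⁿ) and let 𝒱_Λ = { x ∈ ℝⁿ : ‖x‖ ≤ ‖x − λ‖ for all λ ∈ Λ } be its Voronoi region, whose Lebesgue volume equals the covolume V of Λ. Define the second moment σ²(Λ) = (1/(nV)) ∫_{𝒱_Λ} ‖x‖² dx. Then σ²(Λ) ≥ (Γ(n/2+1)^{2/n} / ((n+2)π)) · V^{2/n}, where Γ is the gamma function. In particular, for a full-rank lattice L with point density γ(L) = covol(L)^{−1} and an invertible matrix U ∈ ℝ^{n×n}, σ²(UL) ≥ (Γ(n/2+1)^{2/n}/((n+2)π)) · γ(L)^{−2/n} · |det U|^{2/n}. -/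
open MeasureTheory

/-- The Voronoi region of a lattice `Λ ⊂ ℝⁿ` (points at least as close to `0` as to any
lattice point, in the Euclidean metric). -/
def voronoiRegion (n : ℕ) (Λ : AddSubgroup (Fin n → ℝ)) : Set (Fin n → ℝ) :=
  {x | ∀ l ∈ Λ, ∑ i, x i ^ 2 ≤ ∑ i, (x i - l i) ^ 2}

/-- The (normalized) second moment `σ²(Λ) = (1/(n·V)) ∫_{𝒱_Λ} ‖x‖² dx`, where `V` is the
Lebesgue volume of the Voronoi region (the covolume of the lattice). -/
noncomputable def latticeSecondMoment (n : ℕ) (Λ : AddSubgroup (Fin n → ℝ)) : ℝ :=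
  (1 / ((n : ℝ) * (volume (voronoiRegion n Λ)).toReal)) *
    ∫ x in voronoiRegion n Λ, ∑ i, x i ^ 2

open Real Set

section ZadorAux

lemma ballvol (n : ℕ) (hn : 0 < n) (s : ℝ) (hs : 0 ≤ s) :
    volume {x : Fin n → ℝ | ∑ i, x i ^ 2 ≤ s} =
      ENNReal.ofReal ((Real.sqrt s) ^ n * (Real.sqrt π ^ n / Real.Gamma (n / 2 + 1))) := by
  haveI : Nonempty (Fin n) := Fin.pos_iff_nonempty.mp hn
  have hmp := EuclideanSpace.volume_preserving_symm_measurableEquiv_toLp (Fin n)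
  have hclosed : IsClosed {x : Fin n → ℝ | ∑ i, x i ^ 2 ≤ s} :=
    isClosed_le (by continuity) continuous_const
  rw [← hmp.measure_preimage hclosed.measurableSet.nullMeasurableSet]
  have : ((MeasurableEquiv.toLp 2 (Fin n → ℝ)).symm) ⁻¹' {x : Fin n → ℝ | ∑ i, x i ^ 2 ≤ s}
      = Metric.closedBall (0 : EuclideanSpace ℝ (Fin n)) (Real.sqrt s) := by
    ext x
    simp only [Set.mem_preimage, Set.mem_setOf_eq, Metric.mem_closedBall, dist_zero_right,
      EuclideanSpace.norm_eq]
    rw [show (((MeasurableEquiv.toLp 2 (Fin n → ℝ)).symm) x : Fin n → ℝ) = (x : Fin n → ℝ) from rfl]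
    rw [← Real.sqrt_le_sqrt_iff (by positivity) (y := s)]
    congr! 2
    · simp [sq_abs]
  rw [this, EuclideanSpace.volume_closedBall, Fintype.card_fin,
    ← ENNReal.ofReal_pow (Real.sqrt_nonneg _), ← ENNReal.ofReal_mul (by positivity)]

lemma core (n : ℕ) (hn : 0 < n) (S : Set (Fin n → ℝ)) (hme : MeasurableSet S)
    (hfin : volume S ≠ ⊤) :
    ENNReal.ofReal (((n : ℝ) / (n + 2)) * (volume S).toReal *
        ((volume S).toReal * Real.Gamma ((n : ℝ) / 2 + 1) / Real.sqrt π ^ n) ^ ((2 : ℝ) / n))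
      ≤ ∫⁻ x in S, ENNReal.ofReal (∑ i, x i ^ 2) := by
  have hn' : (0 : ℝ) < n := by exact_mod_cast hn
  set ω : ℝ := Real.sqrt π ^ n / Real.Gamma ((n : ℝ) / 2 + 1) with hω_def
  have hω : 0 < ω := by
    apply div_pos (pow_pos (Real.sqrt_pos.mpr Real.pi_pos) n)
    exact Real.Gamma_pos_of_pos (by positivity)
  set V : ℝ := (volume S).toReal with hV_def
  have hV0 : 0 ≤ V := ENNReal.toReal_nonneg
  have hRR : V * Real.Gamma ((n : ℝ) / 2 + 1) / Real.sqrt π ^ n = V / ω := by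
    rw [hω_def, div_div_eq_mul_div]
  rw [hRR]
  set R : ℝ := (V / ω) ^ ((2 : ℝ) / n) with hR_def
  rcases eq_or_lt_of_le hV0 with hV | hV
  · rw [← hV]; simp
  have hRpos : 0 < R := Real.rpow_pos_of_pos (div_pos hV hω) _
  have hc : (0 : ℝ) < (n : ℝ) / 2 := by positivity
  have hRV : ω * R ^ ((n : ℝ) / 2) = V := by
    rw [hR_def, ← Real.rpow_mul (div_nonneg hV0 hω.le)]
    rw [show (2 : ℝ) / n * ((n : ℝ) / 2) = 1 by field_simp]
    rw [Real.rpow_one, mul_div_cancel₀ _ hω.ne']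
  have hrpow_cont : Continuous fun t : ℝ => t ^ ((n : ℝ) / 2) :=
    continuous_iff_continuousAt.2 fun t => Real.continuousAt_rpow_const t _ (Or.inr hc.le)
  have hg_cont : Continuous fun t : ℝ => V - ω * t ^ ((n : ℝ) / 2) :=
    continuous_const.sub (continuous_const.mul hrpow_cont)
  have hf_meas : Measurable fun x : Fin n → ℝ => ∑ i, x i ^ 2 := by
    exact (continuous_finset_sum _ fun i _ => ((continuous_apply i).pow 2)).measurable
  -- layer cake
  have layer : ∫⁻ x in S, ENNReal.ofReal (∑ i, x i ^ 2) =
      ∫⁻ t in Ioi (0:ℝ), (volume.restrict S) {x | t < ∑ i, x i ^ 2} :=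
    lintegral_eq_lintegral_meas_lt _ (Filter.Eventually.of_forall fun x => by positivity)
      hf_meas.aemeasurable
  -- pointwise bound
  have key : ∀ t ∈ Ioc (0:ℝ) R,
      ENNReal.ofReal (V - ω * t ^ ((n : ℝ) / 2)) ≤ (volume.restrict S) {x | t < ∑ i, x i ^ 2} := by
    intro t ht
    have htpos := ht.1
    have hBmeas : MeasurableSet {x : Fin n → ℝ | ∑ i, x i ^ 2 ≤ t} :=
      hf_meas measurableSet_Iic
    have hAmeas : MeasurableSet {x : Fin n → ℝ | t < ∑ i, x i ^ 2} :=
      hf_meas measurableSet_Ioi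
    rw [Measure.restrict_apply hAmeas]
    have hsub : S ⊆ ({x : Fin n → ℝ | t < ∑ i, x i ^ 2} ∩ S) ∪ {x | ∑ i, x i ^ 2 ≤ t} := by
      intro x hx
      by_cases h : t < ∑ i, x i ^ 2
      · exact Or.inl ⟨h, hx⟩
      · exact Or.inr (not_lt.mp h)
    have h3 : volume S ≤ volume ({x : Fin n → ℝ | t < ∑ i, x i ^ 2} ∩ S) +
        volume {x : Fin n → ℝ | ∑ i, x i ^ 2 ≤ t} :=
      (measure_mono hsub).trans (measure_union_le _ _)
    have hBvol : volume {x : Fin n → ℝ | ∑ i, x i ^ 2 ≤ t} =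
        ENNReal.ofReal (ω * t ^ ((n : ℝ) / 2)) := by
      rw [ballvol n hn t htpos.le]
      congr 1
      rw [show (Real.sqrt t) ^ n = t ^ ((n : ℝ)/2) by
        rw [Real.sqrt_eq_rpow, ← Real.rpow_natCast (t ^ ((1:ℝ)/2)) n, ← Real.rpow_mul htpos.le]
        ring_nf]
      rw [mul_comm]
    calc ENNReal.ofReal (V - ω * t ^ ((n : ℝ) / 2))
        = ENNReal.ofReal V - ENNReal.ofReal (ω * t ^ ((n : ℝ) / 2)) :=
          ENNReal.ofReal_sub _ (by positivity)
      _ = volume S - volume {x : Fin n → ℝ | ∑ i, x i ^ 2 ≤ t} := by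
          rw [hV_def, ENNReal.ofReal_toReal hfin, hBvol]
      _ ≤ volume ({x : Fin n → ℝ | t < ∑ i, x i ^ 2} ∩ S) := tsub_le_iff_right.mpr h3
  calc ENNReal.ofReal (((n : ℝ) / (n + 2)) * V * R)
      = ENNReal.ofReal (∫ t in Ioc (0:ℝ) R, (V - ω * t ^ ((n : ℝ) / 2))) := by
        congr 1
        rw [← intervalIntegral.integral_of_le hRpos.le]
        rw [intervalIntegral.integral_sub intervalIntegrable_const
          ((continuous_const.mul hrpow_cont).intervalIntegrable _ _) (g := fun t : ℝ => ω * t ^ ((n : ℝ) / 2)),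
          intervalIntegral.integral_const, intervalIntegral.integral_const_mul,
          integral_rpow (Or.inl (by linarith))]
        rw [Real.zero_rpow (by positivity), Real.rpow_add hRpos, Real.rpow_one]
        have hne : (n : ℝ) / 2 + 1 ≠ 0 := by positivity
        have hne2 : (n : ℝ) + 2 ≠ 0 := by positivity
        rw [smul_eq_mul, sub_zero, sub_zero]
        rw [show ω * (R ^ ((n:ℝ)/2) * R / ((n:ℝ)/2 + 1)) = V * R / ((n:ℝ)/2+1) by
          rw [← hRV]; ring]
        field_simp
        ring
    _ = ∫⁻ t in Ioc (0:ℝ) R, ENNReal.ofReal (V - ω * t ^ ((n : ℝ) / 2)) := by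
        rw [← ofReal_integral_eq_lintegral_ofReal
          (hg_cont.integrableOn_Ioc)
          ((ae_restrict_iff' measurableSet_Ioc).mpr (Filter.Eventually.of_forall fun t ht => ?_))]
        have : ω * t ^ ((n : ℝ) / 2) ≤ V := by
          rw [← hRV]
          exact mul_le_mul_of_nonneg_left
            (Real.rpow_le_rpow ht.1.le ht.2 hc.le) hω.le
        simp only [Pi.zero_apply]
        linarith
    _ ≤ ∫⁻ t in Ioc (0:ℝ) R, (volume.restrict S) {x | t < ∑ i, x i ^ 2} := by
        refine setLIntegral_mono' measurableSet_Ioc key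
    _ ≤ ∫⁻ t in Ioi (0:ℝ), (volume.restrict S) {x | t < ∑ i, x i ^ 2} :=
        lintegral_mono_set Ioc_subset_Ioi_self
    _ = ∫⁻ x in S, ENNReal.ofReal (∑ i, x i ^ 2) := layer.symm

variable {n : ℕ} {Λ : AddSubgroup (Fin n → ℝ)}

lemma voronoi_closed : IsClosed (voronoiRegion n Λ) := by
  have : voronoiRegion n Λ = ⋂ (l : Fin n → ℝ) (_ : l ∈ Λ),
      {x : Fin n → ℝ | ∑ i, x i ^ 2 ≤ ∑ i, (x i - l i) ^ 2} := by
    ext x; simp [voronoiRegion]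
  rw [this]
  refine isClosed_iInter fun l => isClosed_iInter fun _ => isClosed_le (by fun_prop) (by fun_prop)

lemma voronoi_covers (hn : 0 < n) [hdisc : DiscreteTopology Λ] (x : Fin n → ℝ) :
    ∃ l₀ ∈ Λ, ∀ l ∈ Λ, ∑ i, (x i - l₀ i) ^ 2 ≤ ∑ i, (x i - l i) ^ 2 := by
  haveI : Nonempty (Fin n) := Fin.pos_iff_nonempty.mp hn
  have hΛclosed : IsClosed (Λ : Set (Fin n → ℝ)) := AddSubgroup.isClosed_of_discrete
  set r : ℝ := Real.sqrt (∑ i, x i ^ 2) with hr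
  have hr0 : 0 ≤ r := Real.sqrt_nonneg _
  set K : Set (Fin n → ℝ) := Metric.closedBall 0 (‖x‖ + r) with hK
  have hT : Set.Finite (K ∩ (Λ : Set (Fin n → ℝ))) :=
    Metric.finite_isBounded_inter_isClosed DiscreteTopology.isDiscrete Metric.isBounded_closedBall hΛclosed
  have h0T : (0 : Fin n → ℝ) ∈ K ∩ Λ := by
    constructor
    · simp [hK]; positivity
    · exact Λ.zero_mem
  obtain ⟨l₀, hl₀T, hl₀min⟩ := Set.exists_min_image _ (fun l => ∑ i, (x i - l i) ^ 2) hT ⟨0, h0T⟩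
  have hg0 : ∑ i, (x i - (0:Fin n → ℝ) i) ^ 2 = r ^ 2 := by
    simp [hr, Real.sq_sqrt (by positivity : (0:ℝ) ≤ ∑ i, x i ^ 2)]
  refine ⟨l₀, hl₀T.2, fun l hl => ?_⟩
  by_cases hlK : l ∈ K
  · exact hl₀min l ⟨hlK, hl⟩
  · -- l far away: ∑ (x i - l i)² > r² ≥ min value
    have h1 : ∑ i, (x i - l₀ i) ^ 2 ≤ r ^ 2 := by
      rw [← hg0]; exact hl₀min 0 h0T
    have h2 : ‖x‖ + r < ‖l‖ := by
      by_contra h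
      exact hlK (by simpa [hK, Metric.mem_closedBall] using not_lt.mp h)
    obtain ⟨i, hi⟩ : ∃ i, ‖l‖ = |l i| := by
      obtain ⟨i, _, hi⟩ := Finset.exists_mem_eq_sup Finset.univ Finset.univ_nonempty
        (fun i => (‖l i‖₊ : NNReal))
      exact ⟨i, by rw [Pi.norm_def, hi]; simp [Real.norm_eq_abs]⟩
    have h3 : r < |x i - l i| := by
      have hxi : |x i| ≤ ‖x‖ := by
        simpa [Real.norm_eq_abs] using norm_le_pi_norm x i
      calc r < ‖l‖ - ‖x‖ := by linarith
        _ ≤ |l i| - |x i| := by rw [← hi]; linarith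
        _ ≤ |x i - l i| := by
            have := abs_sub_abs_le_abs_sub (l i) (x i)
            rw [abs_sub_comm] at this; linarith
    have h4 : r ^ 2 < ∑ j, (x j - l j) ^ 2 := by
      calc r ^ 2 < (x i - l i) ^ 2 := by
            rw [← sq_abs (x i - l i)]
            exact pow_lt_pow_left₀ h3 hr0 (by norm_num)
        _ ≤ ∑ j, (x j - l j) ^ 2 :=
            Finset.single_le_sum (f := fun j => (x j - l j) ^ 2)
              (fun j _ => by positivity) (Finset.mem_univ i)
    linarith

noncomputable def dotL (n : ℕ) (a : Fin n → ℝ) : (Fin n → ℝ) →ₗ[ℝ] ℝ where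
  toFun x := ∑ i, x i * a i
  map_add' x y := by simp [add_mul, Finset.sum_add_distrib]
  map_smul' r x := by simp [Finset.mul_sum, mul_assoc]

lemma hyperplane_null {n : ℕ} (a : Fin n → ℝ) (ha : a ≠ 0) (c : ℝ) :
    volume {x : Fin n → ℝ | ∑ i, x i * a i = c} = 0 := by
  obtain ⟨j, hj⟩ := Function.ne_iff.mp ha
  set x₀ : Fin n → ℝ := Pi.single j (c / a j) with hx₀
  have hφx₀ : dotL n a x₀ = c := by
    show ∑ i, x₀ i * a i = c
    rw [hx₀, Finset.sum_eq_single j]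
    · rw [Pi.single_eq_same, div_mul_cancel₀ _ hj]
    · intro i _ hij; rw [Pi.single_eq_of_ne hij, zero_mul]
    · intro h; exact absurd (Finset.mem_univ j) h
  have hker : LinearMap.ker (dotL n a) ≠ ⊤ := by
    intro h
    have : dotL n a (Pi.single j 1) = 0 := by
      rw [← LinearMap.mem_ker, h]; trivial
    have h2 : ∑ i, (Pi.single j (1:ℝ) : Fin n → ℝ) i * a i = a j := by
      rw [Finset.sum_eq_single j]
      · simp
      · intro i _ hij; rw [Pi.single_eq_of_ne hij, zero_mul]
      · intro h; exact absurd (Finset.mem_univ j) h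
    exact hj (by rw [← h2]; exact this)
  have hset : {x : Fin n → ℝ | ∑ i, x i * a i = c} =
      (fun x => x + (-x₀)) ⁻¹' (LinearMap.ker (dotL n a) : Set (Fin n → ℝ)) := by
    ext x
    simp only [Set.mem_setOf_eq, Set.mem_preimage, SetLike.mem_coe, LinearMap.mem_ker,
      map_add, map_neg, hφx₀]
    show _ ↔ dotL n a x + - c = 0
    constructor
    · intro h; show (∑ i, x i * a i) + -c = 0; rw [h]; ring
    · intro h; have : (∑ i, x i * a i) + -c = 0 := h; linarith
  rw [hset, measure_preimage_add_right]
  exact Measure.addHaar_submodule volume _ hker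

lemma voronoi_bounded {n : ℕ} (Λ : AddSubgroup (Fin n → ℝ))
    (L : Submodule ℤ (Fin n → ℝ)) (hL : ∀ y, y ∈ L ↔ y ∈ Λ)
    [DiscreteTopology L] [IsZLattice ℝ L] :
    ∃ C : ℝ, 0 ≤ C ∧ ∀ x ∈ voronoiRegion n Λ, ∑ i, x i ^ 2 ≤ C := by
  classical
  set b := Module.Free.chooseBasis ℤ L
  set b₀ := Module.Basis.ofZLatticeBasis ℝ L b with hb₀
  obtain ⟨C₀, hC₀⟩ := (ZSpan.fundamentalDomain_isBounded b₀).subset_closedBall 0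
  set C₁ := max C₀ 0 with hC₁
  refine ⟨n * C₁ ^ 2, by positivity, fun x hx => ?_⟩
  obtain ⟨v, hv, -⟩ := ZSpan.exist_unique_vadd_mem_fundamentalDomain b₀ x
  have hvL : (↑v : Fin n → ℝ) ∈ L := by
    exact (SetLike.ext_iff.mp (b.ofZLatticeBasis_span ℝ) _).mp v.2
  have hkey : ∑ i, x i ^ 2 ≤ ∑ i, (x i - (-(↑v : Fin n → ℝ)) i) ^ 2 :=
    hx _ ((hL _).mp (neg_mem hvL))
  have hnorm : ‖(↑v : Fin n → ℝ) + x‖ ≤ C₁ := by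
    have := hC₀ hv
    rw [Metric.mem_closedBall, dist_zero_right] at this
    exact le_trans (by exact_mod_cast this) (le_max_left _ _)
  calc ∑ i, x i ^ 2 ≤ ∑ i, (x i - (-(↑v : Fin n → ℝ)) i) ^ 2 := hkey
    _ ≤ ∑ _i : Fin n, C₁ ^ 2 := by
        refine Finset.sum_le_sum fun i _ => ?_
        have h1 : |x i - (-(↑v : Fin n → ℝ)) i| ≤ ‖(↑v : Fin n → ℝ) + x‖ := by
          have := norm_le_pi_norm ((↑v : Fin n → ℝ) + x) i
          simp only [Real.norm_eq_abs] at this ⊢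
          convert this using 2
          simp [Pi.add_apply]; ring
        rw [← sq_abs]
        have h2 : |x i - (-(↑v : Fin n → ℝ)) i| ≤ C₁ := h1.trans hnorm
        exact pow_le_pow_left₀ (abs_nonneg _) h2 2
    _ = n * C₁ ^ 2 := by simp [Finset.sum_const, nsmul_eq_mul]

lemma voronoi_isFD {n : ℕ} (hn : 0 < n) (Λ : AddSubgroup (Fin n → ℝ))
    [DiscreteTopology Λ] (L : Submodule ℤ (Fin n → ℝ)) (hL : ∀ y, y ∈ L ↔ y ∈ Λ) :
    IsAddFundamentalDomain L (voronoiRegion n Λ) volume := by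
  constructor
  · exact voronoi_closed.measurableSet.nullMeasurableSet
  · refine Filter.Eventually.of_forall fun x => ?_
    obtain ⟨l₀, hl₀, hmin⟩ := voronoi_covers (Λ := Λ) hn x
    refine ⟨⟨-l₀, (hL _).mpr (neg_mem hl₀)⟩, fun l hl => ?_⟩
    have h1 : ∀ i, ((⟨-l₀, (hL _).mpr (neg_mem hl₀)⟩ : L) +ᵥ x) i = x i - l₀ i := by
      intro i; show (-l₀ + x) i = _; simp [Pi.add_apply]; ring
    simp only [h1]
    have h2 : ∀ i, x i - l₀ i - l i = x i - (l₀ + l) i := by intro i; simp; ring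
    calc ∑ i, (x i - l₀ i) ^ 2 ≤ ∑ i, (x i - (l₀ + l) i) ^ 2 := hmin _ (Λ.add_mem hl₀ hl)
      _ = ∑ i, (x i - l₀ i - l i) ^ 2 := by simp_rw [h2]
  · intro g g' hgg'
    have hne : (g : Fin n → ℝ) ≠ (g' : Fin n → ℝ) := fun h => hgg' (Subtype.coe_injective h)
    refine measure_mono_null (fun x hx => ?_) (hyperplane_null
      (fun i => 2 * ((g' : Fin n → ℝ) i - (g : Fin n → ℝ) i))
      (fun h => hne (funext fun i => by
        have := congrFun h i
        simp only [Pi.zero_apply] at this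
        linarith))
      (∑ i, ((g' : Fin n → ℝ) i ^ 2 - (g : Fin n → ℝ) i ^ 2)))
    obtain ⟨hx1, hx2⟩ := hx
    obtain ⟨y, hy, rfl⟩ := hx1
    obtain ⟨z, hz, hzz⟩ := hx2
    -- (g +ᵥ y) with y ∈ 𝒱 ; also = g' +ᵥ z with z ∈ 𝒱
    have key : ∀ (a : L) (w : Fin n → ℝ), w ∈ voronoiRegion n Λ → ∀ b : L,
        ∑ i, ((a +ᵥ w) i - (a : Fin n → ℝ) i) ^ 2 ≤
          ∑ i, ((a +ᵥ w) i - (b : Fin n → ℝ) i) ^ 2 := by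
      intro a w hw b
      have hmem : ((b : Fin n → ℝ) - (a : Fin n → ℝ)) ∈ Λ :=
        (hL _).mp (sub_mem b.2 a.2)
      have := hw _ hmem
      calc ∑ i, ((a +ᵥ w) i - (a : Fin n → ℝ) i) ^ 2
          = ∑ i, w i ^ 2 := by
            refine Finset.sum_congr rfl fun i _ => ?_
            have hrfl : (a +ᵥ w) i = (a : Fin n → ℝ) i + w i := rfl
            rw [hrfl]; ring
        _ ≤ ∑ i, (w i - ((b : Fin n → ℝ) - (a : Fin n → ℝ)) i) ^ 2 := this
        _ = ∑ i, ((a +ᵥ w) i - (b : Fin n → ℝ) i) ^ 2 := by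
            refine Finset.sum_congr rfl fun i _ => ?_
            have hrfl : (a +ᵥ w) i = (a : Fin n → ℝ) i + w i := rfl
            rw [hrfl, Pi.sub_apply]; ring
    have e1 : ∑ i, ((g +ᵥ y) i - (g : Fin n → ℝ) i) ^ 2
        ≤ ∑ i, ((g +ᵥ y) i - (g' : Fin n → ℝ) i) ^ 2 := key g y hy g'
    have e2 : ∑ i, ((g +ᵥ y) i - (g' : Fin n → ℝ) i) ^ 2
        ≤ ∑ i, ((g +ᵥ y) i - (g : Fin n → ℝ) i) ^ 2 := by
      have h := key g' z hz g
      have hzz' : g' +ᵥ z = g +ᵥ y := hzz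
      rwa [hzz'] at h
    have heq : ∑ i, ((g +ᵥ y) i - (g : Fin n → ℝ) i) ^ 2
        = ∑ i, ((g +ᵥ y) i - (g' : Fin n → ℝ) i) ^ 2 := le_antisymm e1 e2
    simp only [Set.mem_setOf_eq]
    have expand : ∀ i, (g +ᵥ y) i * (2 * ((g' : Fin n → ℝ) i - (g : Fin n → ℝ) i))
        = ((g +ᵥ y) i - (g : Fin n → ℝ) i) ^ 2 - ((g +ᵥ y) i - (g' : Fin n → ℝ) i) ^ 2
          + ((g' : Fin n → ℝ) i ^ 2 - (g : Fin n → ℝ) i ^ 2) := by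
      intro i; ring
    rw [Finset.sum_congr rfl fun i _ => expand i, Finset.sum_add_distrib,
      Finset.sum_sub_distrib, heq, sub_self, zero_add]

lemma master (n : ℕ) (hn : 0 < n) (Λ : AddSubgroup (Fin n → ℝ))
    [hdisc : DiscreteTopology Λ]
    (L : Submodule ℤ (Fin n → ℝ)) (hL : ∀ y, y ∈ L ↔ y ∈ Λ)
    [DiscreteTopology L] [IsZLattice ℝ L] :
    (volume (voronoiRegion n Λ)).toReal = ZLattice.covolume L volume ∧
    latticeSecondMoment n Λ ≥
      Real.Gamma ((n : ℝ) / 2 + 1) ^ ((2 : ℝ) / n) / (((n : ℝ) + 2) * Real.pi) *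
        ((volume (voronoiRegion n Λ)).toReal) ^ ((2 : ℝ) / n) := by
  have hn' : (0 : ℝ) < n := by exact_mod_cast hn
  set 𝒱 := voronoiRegion n Λ with h𝒱
  have hFD := voronoi_isFD hn Λ L hL
  have hcov : ZLattice.covolume L volume = (volume 𝒱).toReal :=
    ZLattice.covolume_eq_measure_fundamentalDomain L volume hFD
  obtain ⟨C, hC0, hCb⟩ := voronoi_bounded Λ L hL
  have hsub : 𝒱 ⊆ {x : Fin n → ℝ | ∑ i, x i ^ 2 ≤ C} := hCb
  have hfin : volume 𝒱 ≠ ⊤ := by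
    refine ne_top_of_le_ne_top ?_ (measure_mono hsub)
    rw [ballvol n hn C hC0]; exact ENNReal.ofReal_ne_top
  refine ⟨hcov.symm, ?_⟩
  set V : ℝ := (volume 𝒱).toReal with hV
  have hVpos : 0 < V := hcov ▸ ZLattice.covolume_pos L volume
  have hΓ : 0 < Real.Gamma ((n : ℝ) / 2 + 1) := Real.Gamma_pos_of_pos (by positivity)
  have hmeas : MeasurableSet 𝒱 := voronoi_closed.measurableSet
  have hf_cont : Continuous fun x : Fin n → ℝ => ∑ i, x i ^ 2 := by fun_prop
  -- the Bochner integral equals toReal of the lintegral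
  have hBo : ∫ x in 𝒱, ∑ i, x i ^ 2 =
      (∫⁻ x in 𝒱, ENNReal.ofReal (∑ i, x i ^ 2)).toReal :=
    integral_eq_lintegral_of_nonneg_ae
      (Filter.Eventually.of_forall fun x => by positivity)
      hf_cont.aestronglyMeasurable.restrict
  have hlfin : ∫⁻ x in 𝒱, ENNReal.ofReal (∑ i, x i ^ 2) ≠ ⊤ := by
    refine ne_top_of_le_ne_top (b := ENNReal.ofReal C * volume 𝒱) ?_ ?_
    · exact ENNReal.mul_ne_top ENNReal.ofReal_ne_top hfin
    · calc ∫⁻ x in 𝒱, ENNReal.ofReal (∑ i, x i ^ 2)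
          ≤ ∫⁻ _x in 𝒱, ENNReal.ofReal C :=
            setLIntegral_mono' hmeas fun x hx => ENNReal.ofReal_le_ofReal (hCb x hx)
        _ = ENNReal.ofReal C * volume 𝒱 := by rw [setLIntegral_const]
  set A : ℝ := ((n : ℝ) / (n + 2)) * V *
      (V * Real.Gamma ((n : ℝ) / 2 + 1) / Real.sqrt π ^ n) ^ ((2 : ℝ) / n) with hA
  have hcore := core n hn 𝒱 hmeas hfin
  have hIA : A ≤ ∫ x in 𝒱, ∑ i, x i ^ 2 := by
    rw [hBo]
    have := ENNReal.toReal_mono hlfin hcore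
    rwa [ENNReal.toReal_ofReal (by positivity)] at this
  -- final algebra
  have hsq : (Real.sqrt π ^ n : ℝ) ^ ((2:ℝ)/n) = π := by
    rw [← Real.rpow_natCast (Real.sqrt π) n, ← Real.rpow_mul (Real.sqrt_nonneg _),
      show (n : ℝ) * ((2:ℝ)/n) = 2 by field_simp]
    rw [show ((2:ℝ)) = ((2:ℕ):ℝ) by norm_num, Real.rpow_natCast, Real.sq_sqrt Real.pi_pos.le]
  have hRexp : (V * Real.Gamma ((n : ℝ) / 2 + 1) / Real.sqrt π ^ n) ^ ((2 : ℝ) / n)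
      = V ^ ((2:ℝ)/n) * Real.Gamma ((n : ℝ) / 2 + 1) ^ ((2:ℝ)/n) / π := by
    rw [Real.div_rpow (by positivity) (by positivity),
      Real.mul_rpow hVpos.le hΓ.le, hsq]
  show _ ≤ latticeSecondMoment n Λ
  have hunfold : latticeSecondMoment n Λ = (1 / ((n : ℝ) * V)) * ∫ x in 𝒱, ∑ i, x i ^ 2 := rfl
  rw [hunfold]
  have hstep : (1 / ((n : ℝ) * V)) * A ≤ (1 / ((n : ℝ) * V)) * ∫ x in 𝒱, ∑ i, x i ^ 2 :=
    mul_le_mul_of_nonneg_left hIA (by positivity)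
  refine le_trans (le_of_eq ?_) hstep
  rw [hA, hRexp]
  have h2 : ((n:ℝ) + 2) ≠ 0 := by positivity
  field_simp

end ZadorAux

/-- **Zador's lower bound.**  For a full-rank lattice `Λ ⊂ ℝⁿ` with
Voronoi-region volume (covolume) `V`, `σ²(Λ) ≥ Γ(n/2+1)^(2/n)/((n+2)π) · V^(2/n)`.
In particular, for a full-rank lattice `L` with point density `γ(L) = covol(L)⁻¹` and an
invertible `U`, `σ²(UL) ≥ Γ(n/2+1)^(2/n)/((n+2)π) · γ(L)^(−2/n) · |det U|^(2/n)`. -/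
theorem stmt_5 (n : ℕ) (hn : 0 < n)
    (Λ : AddSubgroup (Fin n → ℝ)) (hdisc : DiscreteTopology Λ)
    (hspan : Submodule.span ℝ (Λ : Set (Fin n → ℝ)) = ⊤)
    (U : Matrix (Fin n) (Fin n) ℝ) (hU : IsUnit U.det) :
    latticeSecondMoment n Λ ≥
      Real.Gamma ((n : ℝ) / 2 + 1) ^ ((2 : ℝ) / n) / (((n : ℝ) + 2) * Real.pi) *
        ((volume (voronoiRegion n Λ)).toReal) ^ ((2 : ℝ) / n)
    ∧ latticeSecondMoment n (Λ.map U.mulVecLin.toAddMonoidHom) ≥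
      Real.Gamma ((n : ℝ) / 2 + 1) ^ ((2 : ℝ) / n) / (((n : ℝ) + 2) * Real.pi) *
        (((volume (voronoiRegion n Λ)).toReal)⁻¹) ^ (-(2 : ℝ) / n) *
        |U.det| ^ ((2 : ℝ) / n) := by
  classical
  have hn' : (0 : ℝ) < n := by exact_mod_cast hn
  set L : Submodule ℤ (Fin n → ℝ) := AddSubgroup.toIntSubmodule Λ with hLdef
  have hL : ∀ y, y ∈ L ↔ y ∈ Λ := fun y => by rw [← SetLike.mem_coe, AddSubgroup.coe_toIntSubmodule]; rfl
  haveI : DiscreteTopology L := hdisc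
  haveI : IsZLattice ℝ L := ⟨hspan⟩
  -- the linear equivalence induced by U
  haveI := U.invertibleOfIsUnitDet hU
  set eL : (Fin n → ℝ) ≃ₗ[ℝ] (Fin n → ℝ) := U.toLinearEquiv' ‹_› with heL
  set e : (Fin n → ℝ) ≃L[ℝ] (Fin n → ℝ) := eL.toContinuousLinearEquiv with he
  have he_apply : ∀ x, e x = U.mulVec x := fun x => rfl
  set Λ' := Λ.map U.mulVecLin.toAddMonoidHom with hΛ'
  set L' : Submodule ℤ (Fin n → ℝ) := AddSubgroup.toIntSubmodule Λ' with hL'def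
  have hL' : ∀ y, y ∈ L' ↔ y ∈ Λ' := fun y => by rw [← SetLike.mem_coe, AddSubgroup.coe_toIntSubmodule]; rfl
  have hL'eq : L' = ZLattice.comap ℝ L e.symm.toLinearMap := by
    ext y
    rw [hL' y]
    have h1 : y ∈ ZLattice.comap ℝ L e.symm.toLinearMap ↔ e.symm y ∈ Λ := by
      rw [← hL (e.symm y)]; rfl
    rw [h1, hΛ', AddSubgroup.mem_map]
    constructor
    · rintro ⟨w, hw, rfl⟩
      have : e.symm (e w) = w := e.symm_apply_apply w
      rw [show U.mulVecLin.toAddMonoidHom w = e w from rfl, this]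
      exact hw
    · intro hw
      exact ⟨e.symm y, hw, by rw [show U.mulVecLin.toAddMonoidHom (e.symm y) =
        e (e.symm y) from rfl, e.apply_symm_apply]⟩
  haveI hdL' : DiscreteTopology L' := by rw [hL'eq]; infer_instance
  haveI : IsZLattice ℝ L' := by
    constructor
    have hset : (L' : Set (Fin n → ℝ)) = ⇑(e.toLinearMap) '' (Λ : Set (Fin n → ℝ)) := by
      ext y
      constructor
      · intro hy
        obtain ⟨w, hw, hwy⟩ := AddSubgroup.mem_map.mp ((hL' y).mp hy)
        exact ⟨w, hw, hwy⟩
      · rintro ⟨w, hw, rfl⟩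
        exact (hL' _).mpr (AddSubgroup.mem_map.mpr ⟨w, hw, rfl⟩)
    rw [hset, ← Submodule.map_span, hspan, Submodule.map_top, LinearMap.range_eq_top]
    exact e.surjective
  haveI hdΛ' : DiscreteTopology Λ' := hdL'
  -- covolume of the mapped lattice
  have hcard : Fintype.card (Module.Free.ChooseBasisIndex ℤ L) = n := by
    rw [← Module.finrank_eq_card_chooseBasisIndex, ZLattice.rank ℝ L,
      Module.finrank_fin_fun]
  set b1 : Module.Basis (Fin n) ℤ L :=
    (Module.Free.chooseBasis ℤ L).reindex (Fintype.equivFinOfCardEq hcard) with hb1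
  have hinj : Function.Injective (U.mulVecLin.restrictScalars ℤ) := by
    intro a b hab
    exact e.injective hab
  have hmapeq : L.map (U.mulVecLin.restrictScalars ℤ) = L' := by
    ext y
    rw [hL' y, hΛ', Submodule.mem_map, AddSubgroup.mem_map]
    constructor
    · rintro ⟨w, hw, rfl⟩; exact ⟨w, (hL w).mp hw, rfl⟩
    · rintro ⟨w, hw, rfl⟩; exact ⟨w, (hL w).mpr hw, rfl⟩
  set b2 : Module.Basis (Fin n) ℤ L' :=
    (b1.map (Submodule.equivMapOfInjective _ hinj L)).map (LinearEquiv.ofEq _ _ hmapeq) with hb2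
  have hb2coe : ∀ i, ((b2 i : Fin n → ℝ)) = U.mulVec (b1 i) := by
    intro i
    rw [hb2]
    simp only [Module.Basis.map_apply]
    rfl
  have hcovL : ZLattice.covolume L volume = |(Matrix.of ((↑) ∘ b1)).det| :=
    ZLattice.covolume_eq_det L b1
  have hcovL' : ZLattice.covolume L' volume = |(Matrix.of ((↑) ∘ b2)).det| :=
    ZLattice.covolume_eq_det L' b2
  have hmatrix : (Matrix.of ((↑) ∘ b2) : Matrix (Fin n) (Fin n) ℝ)
      = (Matrix.of ((↑) ∘ b1) : Matrix (Fin n) (Fin n) ℝ) * U.transpose := by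
    ext i j
    simp only [Matrix.of_apply, Function.comp_apply, Matrix.mul_apply, Matrix.transpose_apply]
    rw [hb2coe i]
    simp [Matrix.mulVec, dotProduct, mul_comm]
  have hcov_rel : ZLattice.covolume L' volume = |U.det| * ZLattice.covolume L volume := by
    rw [hcovL', hcovL, hmatrix, Matrix.det_mul, Matrix.det_transpose, abs_mul, mul_comm]
  -- apply master
  obtain ⟨hv1, hm1⟩ := master n hn Λ L hL
  obtain ⟨hv2, hm2⟩ := master n hn Λ' L' hL'
  refine ⟨hm1, ?_⟩
  refine le_trans (le_of_eq ?_) hm2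
  rw [hv2, hcov_rel, ← hv1]
  set V : ℝ := (volume (voronoiRegion n Λ)).toReal with hV
  have hVpos : 0 < V := by rw [hv1]; exact ZLattice.covolume_pos L volume
  have hdet : (0:ℝ) < |U.det| := abs_pos.mpr hU.ne_zero
  rw [Real.mul_rpow hdet.le hVpos.le]
  rw [show (-(2:ℝ))/n = -((2:ℝ)/n) by ring, Real.rpow_neg (by positivity),
    Real.inv_rpow hVpos.le, inv_inv]
  ring
end

section
/- For nonzero x, y ∈ ℝⁿ define Δ_FP(x,y) = n·∑_{i=1}^n (x_i²/‖x‖²)·(y_i²/‖y‖²). Let S be a Haar-random orthogonal matrix in O(n). Then 𝔼[Δ_FP(Sx, Sy)] ≤ 3n/(n+2) < 3. -/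
open MeasureTheory ProbabilityTheory Matrix

/-- `Δ_FP(x,y) = n ∑ᵢ (xᵢ²/‖x‖²)(yᵢ²/‖y‖²)`. -/
noncomputable def deltaFP {n : ℕ} (x y : Fin n → ℝ) : ℝ :=
  (n : ℝ) * ∑ i, (x i ^ 2 / ∑ j, x j ^ 2) * (y i ^ 2 / ∑ j, y j ^ 2)


noncomputable def rotM {n : ℕ} (i j : Fin n) : Matrix (Fin n) (Fin n) ℝ :=
  Matrix.of fun m l =>
    if m = i then (if l = i then (Real.sqrt 2)⁻¹ else if l = j then -(Real.sqrt 2)⁻¹ else 0)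
    else if m = j then (if l = i then (Real.sqrt 2)⁻¹ else if l = j then (Real.sqrt 2)⁻¹ else 0)
    else if l = m then 1 else 0

lemma sum_pair_support {n : ℕ} {i j : Fin n} (hij : i ≠ j) (f : Fin n → ℝ)
    (hf : ∀ l, l ≠ i → l ≠ j → f l = 0) : ∑ l, f l = f i + f j := by
  rw [← Finset.sum_pair hij]
  refine (Finset.sum_subset (Finset.subset_univ _) (fun l _ hl => ?_)).symm
  simp only [Finset.mem_insert, Finset.mem_singleton, not_or] at hl
  exact hf l hl.1 hl.2

lemma sqrt2_inv_sq : (Real.sqrt 2)⁻¹ * (Real.sqrt 2)⁻¹ = 1/2 := by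
  rw [← mul_inv, Real.mul_self_sqrt (by norm_num)]
  norm_num

lemma rotM_mem {n : ℕ} {i j : Fin n} (hij : i ≠ j) :
    rotM i j ∈ Matrix.orthogonalGroup (Fin n) ℝ := by
  rw [Matrix.mem_orthogonalGroup_iff]
  ext k l
  rw [Matrix.mul_apply]
  simp only [Matrix.star_apply, Matrix.transpose_apply, star_trivial, Matrix.one_apply]
  have ha := sqrt2_inv_sq
  by_cases hki : k = i <;> by_cases hkj : k = j <;>
    by_cases hli : l = i <;> by_cases hlj : l = j <;>
    first
    | (exact absurd (hki ▸ hkj ▸ rfl : i = j) hij)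
    | (exact absurd (hli ▸ hlj ▸ rfl : i = j) hij)
    | (have hrow : ∀ m : Fin n, (rotM i j) k m = if m = k then 1 else 0 := by
         intro m; simp [rotM, hki, hkj]
       simp only [hrow, ite_mul, one_mul, zero_mul]
       rw [Finset.sum_ite_eq' Finset.univ k (fun m => (rotM i j) l m)]
       simp_all [rotM, Ne.symm hki, Ne.symm hkj, eq_comm]
       done)
    | (rw [sum_pair_support hij _ (fun m hmi hmj => by simp [rotM, hmi, hmj, hki, hkj, hli, hlj])]
       simp_all [rotM, hij, Ne.symm hij]
       try first
       | rfl
       | linarith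
       | simp_all [eq_comm]
       | (simp_all [eq_comm]; linarith))

lemma normpres {n : ℕ} {A : Matrix (Fin n) (Fin n) ℝ}
    (hA : A ∈ Matrix.orthogonalGroup (Fin n) ℝ) (x : Fin n → ℝ) :
    ∑ j, (A.mulVec x j) ^ 2 = ∑ j, x j ^ 2 := by
  have h : star A * A = 1 := (Matrix.mem_orthogonalGroup_iff' _ _).mp hA
  have h' : Aᵀ * A = 1 := by simpa [Matrix.star_eq_conjTranspose] using h
  have e1 : (A.mulVec x) ⬝ᵥ (A.mulVec x) = x ⬝ᵥ x := by
    rw [Matrix.dotProduct_mulVec]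
    nth_rewrite 1 [← Matrix.vecMul_transpose]
    rw [Matrix.vecMul_vecMul, h', Matrix.vecMul_one]
  simpa [dotProduct, pow_two] using e1

lemma meas_u {n : ℕ} (x : Fin n → ℝ) (i : Fin n) :
    Measurable (fun S : Fin n → Fin n → ℝ => (Matrix.of S).mulVec x i) := by
  have : (fun S : Fin n → Fin n → ℝ => (Matrix.of S).mulVec x i)
      = fun S => ∑ j, S i j * x j := by
    funext S; simp [Matrix.mulVec, dotProduct]
  rw [this]
  exact Finset.measurable_sum _ fun j _ =>
    ((measurable_pi_apply j).comp (measurable_pi_apply i)).mul_const _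

lemma bound_u {n : ℕ} (x : Fin n → ℝ) (μ : Measure (Fin n → Fin n → ℝ))
    (hsupp : ∀ᵐ S ∂μ, Matrix.of S ∈ Matrix.orthogonalGroup (Fin n) ℝ) :
    ∀ᵐ S ∂μ, ∀ i, ((Matrix.of S).mulVec x i) ^ 2 ≤ ∑ j, x j ^ 2 := by
  filter_upwards [hsupp] with S hS i
  rw [← normpres hS x]
  exact Finset.single_le_sum (f := fun j => ((Matrix.of S).mulVec x j) ^ 2)
    (fun j _ => sq_nonneg _) (Finset.mem_univ i)

lemma integrable_u4 {n : ℕ} (x : Fin n → ℝ) (μ : Measure (Fin n → Fin n → ℝ))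
    [IsProbabilityMeasure μ]
    (hsupp : ∀ᵐ S ∂μ, Matrix.of S ∈ Matrix.orthogonalGroup (Fin n) ℝ) (i : Fin n) :
    Integrable (fun S => ((Matrix.of S).mulVec x i) ^ 4) μ := by
  refine (integrable_const ((∑ j, x j ^ 2) ^ 2)).mono'
    (((meas_u x i).pow_const 4).aestronglyMeasurable) ?_
  filter_upwards [bound_u x μ hsupp] with S hS
  have h := hS i
  have h0 : (0:ℝ) ≤ ((Matrix.of S).mulVec x i) ^ 2 := sq_nonneg _
  rw [Real.norm_eq_abs, abs_of_nonneg (by positivity)]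
  nlinarith

lemma integrable_u22 {n : ℕ} (x : Fin n → ℝ) (μ : Measure (Fin n → Fin n → ℝ))
    [IsProbabilityMeasure μ]
    (hsupp : ∀ᵐ S ∂μ, Matrix.of S ∈ Matrix.orthogonalGroup (Fin n) ℝ) (i j : Fin n) :
    Integrable (fun S => ((Matrix.of S).mulVec x i) ^ 2 * ((Matrix.of S).mulVec x j) ^ 2) μ := by
  refine (integrable_const ((∑ j, x j ^ 2) ^ 2)).mono'
    (((meas_u x i).pow_const 2).mul ((meas_u x j).pow_const 2)).aestronglyMeasurable ?_
  filter_upwards [bound_u x μ hsupp] with S hS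
  have hi := hS i; have hj := hS j
  have h0i : (0:ℝ) ≤ ((Matrix.of S).mulVec x i) ^ 2 := sq_nonneg _
  have h0j : (0:ℝ) ≤ ((Matrix.of S).mulVec x j) ^ 2 := sq_nonneg _
  rw [Real.norm_eq_abs, abs_of_nonneg (by positivity)]
  nlinarith

lemma int_comp {n : ℕ} (μ : Measure (Fin n → Fin n → ℝ))
    (hinv : ∀ Q : Matrix (Fin n) (Fin n) ℝ, Q ∈ Matrix.orthogonalGroup (Fin n) ℝ →
      Measure.map (fun S : Fin n → Fin n → ℝ => Matrix.of.symm (Q * Matrix.of S)) μ = μ)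
    {Q : Matrix (Fin n) (Fin n) ℝ} (hQ : Q ∈ Matrix.orthogonalGroup (Fin n) ℝ)
    (f : (Fin n → Fin n → ℝ) → ℝ) (hf : Measurable f) :
    ∫ S, f (Matrix.of.symm (Q * Matrix.of S)) ∂μ = ∫ S, f S ∂μ := by
  have hT : Measurable (fun S : Fin n → Fin n → ℝ => Matrix.of.symm (Q * Matrix.of S)) := by
    apply measurable_pi_lambda; intro a; apply measurable_pi_lambda; intro b
    have : (fun S : Fin n → Fin n → ℝ => Matrix.of.symm (Q * Matrix.of S) a b)
        = fun S => ∑ k, Q a k * S k b := by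
      funext S; simp [Matrix.mul_apply]
    rw [this]
    exact Finset.measurable_sum _ fun k _ =>
      measurable_const.mul ((measurable_pi_apply b).comp (measurable_pi_apply k))
  conv_rhs => rw [← hinv Q hQ]
  rw [integral_map hT.aemeasurable hf.aestronglyMeasurable]

lemma pair_relation {n : ℕ} (x : Fin n → ℝ) (μ : Measure (Fin n → Fin n → ℝ))
    [IsProbabilityMeasure μ]
    (hsupp : ∀ᵐ S ∂μ, Matrix.of S ∈ Matrix.orthogonalGroup (Fin n) ℝ)
    (hinv : ∀ Q : Matrix (Fin n) (Fin n) ℝ, Q ∈ Matrix.orthogonalGroup (Fin n) ℝ →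
      Measure.map (fun S : Fin n → Fin n → ℝ => Matrix.of.symm (Q * Matrix.of S)) μ = μ)
    {i j : Fin n} (hij : i ≠ j) :
    (∫ S, ((Matrix.of S).mulVec x i) ^ 4 ∂μ) + (∫ S, ((Matrix.of S).mulVec x j) ^ 4 ∂μ)
      = 6 * ∫ S, ((Matrix.of S).mulVec x i) ^ 2 * ((Matrix.of S).mulVec x j) ^ 2 ∂μ := by
  have ha := sqrt2_inv_sq
  have key := int_comp μ hinv (rotM_mem hij)
    (fun S => ((Matrix.of S).mulVec x i) ^ 4 + ((Matrix.of S).mulVec x j) ^ 4)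
    (((meas_u x i).pow_const 4).add ((meas_u x j).pow_const 4))
  have hQrw : ∀ S : Fin n → Fin n → ℝ,
      (Matrix.of (Matrix.of.symm (rotM i j * Matrix.of S))).mulVec x
        = (rotM i j).mulVec ((Matrix.of S).mulVec x) := by
    intro S; simp [Matrix.mulVec_mulVec]
  have hQi : ∀ S : Fin n → Fin n → ℝ,
      (Matrix.of (Matrix.of.symm (rotM i j * Matrix.of S))).mulVec x i
        = (Real.sqrt 2)⁻¹ * ((Matrix.of S).mulVec x i) - (Real.sqrt 2)⁻¹ * ((Matrix.of S).mulVec x j) := by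
    intro S
    rw [hQrw S]
    show ∑ l, rotM i j i l * ((Matrix.of S).mulVec x) l = _
    rw [sum_pair_support hij _ (fun l hli hlj => by simp [rotM, hli, hlj])]
    simp [rotM, hij, Ne.symm hij]
    ring
  have hQj : ∀ S : Fin n → Fin n → ℝ,
      (Matrix.of (Matrix.of.symm (rotM i j * Matrix.of S))).mulVec x j
        = (Real.sqrt 2)⁻¹ * ((Matrix.of S).mulVec x i) + (Real.sqrt 2)⁻¹ * ((Matrix.of S).mulVec x j) := by
    intro S
    rw [hQrw S]
    show ∑ l, rotM i j j l * ((Matrix.of S).mulVec x) l = _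
    rw [sum_pair_support hij _ (fun l hli hlj => by simp [rotM, hli, hlj, Ne.symm hij])]
    simp [rotM, hij, Ne.symm hij]
  have expand : (fun S : Fin n → Fin n → ℝ =>
      ((Matrix.of (Matrix.of.symm (rotM i j * Matrix.of S))).mulVec x i) ^ 4
        + ((Matrix.of (Matrix.of.symm (rotM i j * Matrix.of S))).mulVec x j) ^ 4)
      = (fun S => (1/2) * (((Matrix.of S).mulVec x i) ^ 4) + ((1/2) * (((Matrix.of S).mulVec x j) ^ 4)
          + 3 * (((Matrix.of S).mulVec x i) ^ 2 * ((Matrix.of S).mulVec x j) ^ 2))) := by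
    funext S
    rw [hQi S, hQj S]
    have h4 : ((Real.sqrt 2)⁻¹) ^ 4 = 1/4 := by
      rw [show ((Real.sqrt 2)⁻¹) ^ 4
          = ((Real.sqrt 2)⁻¹ * (Real.sqrt 2)⁻¹) * ((Real.sqrt 2)⁻¹ * (Real.sqrt 2)⁻¹) by ring, ha]
      norm_num
    linear_combination (2 * ((Matrix.of S).mulVec x i) ^ 4 + 12 * ((Matrix.of S).mulVec x i) ^ 2 * ((Matrix.of S).mulVec x j) ^ 2 + 2 * ((Matrix.of S).mulVec x j) ^ 4) * h4
  rw [expand] at key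
  have h1 := (integrable_u4 x μ hsupp i).const_mul ((1:ℝ)/2)
  have h2 := (integrable_u4 x μ hsupp j).const_mul ((1:ℝ)/2)
  have h3 := (integrable_u22 x μ hsupp i j).const_mul (3:ℝ)
  have h23 : Integrable (fun S => 1/2 * (((Matrix.of S).mulVec x j) ^ 4)
      + 3 * (((Matrix.of S).mulVec x i) ^ 2 * ((Matrix.of S).mulVec x j) ^ 2)) μ := h2.add h3
  rw [integral_add h1 h23, integral_add h2 h3,
    integral_add (integrable_u4 x μ hsupp i) (integrable_u4 x μ hsupp j),
    integral_const_mul, integral_const_mul, integral_const_mul] at key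
  linarith [key]

lemma moment {n : ℕ} (x : Fin n → ℝ) (μ : Measure (Fin n → Fin n → ℝ))
    [IsProbabilityMeasure μ]
    (hsupp : ∀ᵐ S ∂μ, Matrix.of S ∈ Matrix.orthogonalGroup (Fin n) ℝ)
    (hinv : ∀ Q : Matrix (Fin n) (Fin n) ℝ, Q ∈ Matrix.orthogonalGroup (Fin n) ℝ →
      Measure.map (fun S : Fin n → Fin n → ℝ => Matrix.of.symm (Q * Matrix.of S)) μ = μ) :
    ∫ S, ∑ i, ((Matrix.of S).mulVec x i) ^ 4 ∂μ
      = 3 * (∑ j, x j ^ 2) ^ 2 / ((n : ℝ) + 2) := by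
  set X := ∑ j, x j ^ 2 with hX
  set A : Fin n → ℝ := fun i => ∫ S, ((Matrix.of S).mulVec x i) ^ 4 ∂μ with hA
  set B : Fin n → Fin n → ℝ :=
    fun i j => ∫ S, ((Matrix.of S).mulVec x i) ^ 2 * ((Matrix.of S).mulVec x j) ^ 2 ∂μ with hB
  have hswap : ∫ S, ∑ i, ((Matrix.of S).mulVec x i) ^ 4 ∂μ = ∑ i, A i :=
    integral_finset_sum _ (fun i _ => integrable_u4 x μ hsupp i)
  have hptsum : ∀ S : Fin n → Fin n → ℝ, (∑ i, ((Matrix.of S).mulVec x i) ^ 2) ^ 2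
      = ∑ i, (((Matrix.of S).mulVec x i) ^ 4
          + ∑ j ∈ Finset.univ.erase i,
              ((Matrix.of S).mulVec x i) ^ 2 * ((Matrix.of S).mulVec x j) ^ 2) := by
    intro S
    rw [pow_two, Finset.sum_mul_sum]
    refine Finset.sum_congr rfl fun i _ => ?_
    conv_lhs => rw [← Finset.add_sum_erase Finset.univ _ (Finset.mem_univ i)]
    congr 1
    ring
  have hconst : ∫ S, (∑ i, ((Matrix.of S).mulVec x i) ^ 2) ^ 2 ∂μ = X ^ 2 := by
    have hae : ∀ᵐ S ∂μ, (∑ i, ((Matrix.of S).mulVec x i) ^ 2) ^ 2 = X ^ 2 := by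
      filter_upwards [hsupp] with S hS
      rw [normpres hS x]
    rw [integral_congr_ae hae, integral_const]
    simp
  have hint_inner : ∀ i : Fin n, Integrable (fun S => ((Matrix.of S).mulVec x i) ^ 4
      + ∑ j ∈ Finset.univ.erase i,
          ((Matrix.of S).mulVec x i) ^ 2 * ((Matrix.of S).mulVec x j) ^ 2) μ :=
    fun i => (integrable_u4 x μ hsupp i).add
      (integrable_finset_sum _ fun j _ => integrable_u22 x μ hsupp i j)
  have e1 : ∑ i, (A i + ∑ j ∈ Finset.univ.erase i, B i j) = X ^ 2 := by
    rw [← hconst]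
    simp only [hptsum]
    rw [integral_finset_sum _ (fun i _ => hint_inner i)]
    refine Finset.sum_congr rfl fun i _ => ?_
    rw [integral_add (integrable_u4 x μ hsupp i)
      (integrable_finset_sum _ fun j _ => integrable_u22 x μ hsupp i j),
      integral_finset_sum _ fun j _ => integrable_u22 x μ hsupp i j]
  have hpair : ∀ i, ∀ j ∈ Finset.univ.erase i, B i j = (A i + A j) / 6 := by
    intro i j hj
    have hij : j ≠ i := (Finset.mem_erase.mp hj).1
    have h := pair_relation x μ hsupp hinv (Ne.symm hij)
    rw [hA, hB]
    dsimp only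
    linarith [h]
  have hsum2 : ∑ i, ∑ j ∈ Finset.univ.erase i, B i j
      = ((n : ℝ) - 1) * (∑ i, A i) / 3 := by
    have hrow : ∀ i, ∑ j ∈ Finset.univ.erase i, B i j
        = ((n : ℝ) * A i + (∑ k, A k) - 2 * A i) / 6 := by
      intro i
      rw [Finset.sum_congr rfl (fun j hj => hpair i j hj), ← Finset.sum_div,
        Finset.sum_erase_eq_sub (Finset.mem_univ i), Finset.sum_add_distrib,
        Finset.sum_const, Finset.card_univ, Fintype.card_fin, nsmul_eq_mul]
      ring
    rw [Finset.sum_congr rfl (fun i _ => hrow i), ← Finset.sum_div]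
    rw [Finset.sum_sub_distrib, Finset.sum_add_distrib, ← Finset.mul_sum,
      Finset.sum_const, Finset.card_univ, Fintype.card_fin, nsmul_eq_mul, ← Finset.mul_sum]
    ring
  rw [Finset.sum_add_distrib, hsum2] at e1
  rw [hswap, eq_div_iff (by positivity : ((n : ℝ) + 2) ≠ 0)]
  linear_combination 3 * e1

/-- For nonzero `x, y ∈ ℝⁿ` and a Haar-random orthogonal `S ∈ O(n)`
(law: a probability measure on matrices concentrated on the orthogonal group and
invariant under left multiplication by any orthogonal matrix),
`𝔼[Δ_FP(Sx, Sy)] ≤ 3n/(n+2) < 3`. -/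
theorem stmt_11 (n : ℕ) (hn : 0 < n) (x y : Fin n → ℝ) (hx : x ≠ 0) (hy : y ≠ 0)
    (μ : Measure (Fin n → Fin n → ℝ)) [IsProbabilityMeasure μ]
    (hsupp : ∀ᵐ S ∂μ, Matrix.of S ∈ Matrix.orthogonalGroup (Fin n) ℝ)
    (hinv : ∀ Q : Matrix (Fin n) (Fin n) ℝ, Q ∈ Matrix.orthogonalGroup (Fin n) ℝ →
      Measure.map (fun S : Fin n → Fin n → ℝ => Matrix.of.symm (Q * Matrix.of S)) μ = μ) :
    (∫ S : Fin n → Fin n → ℝ,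
        deltaFP ((Matrix.of S).mulVec x) ((Matrix.of S).mulVec y) ∂μ)
      ≤ 3 * (n : ℝ) / ((n : ℝ) + 2)
    ∧ 3 * (n : ℝ) / ((n : ℝ) + 2) < 3 := by
  have hnn : (0:ℝ) ≤ (n : ℝ) := Nat.cast_nonneg n
  constructor
  · set X := ∑ j, x j ^ 2 with hXdef
    set Y := ∑ j, y j ^ 2 with hYdef
    have hX0 : 0 < X := by
      obtain ⟨k, hk⟩ := Function.ne_iff.mp hx
      exact lt_of_lt_of_le (pow_two_pos_of_ne_zero hk)
        (Finset.single_le_sum (f := fun j => x j ^ 2) (fun j _ => sq_nonneg _) (Finset.mem_univ k))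
    have hY0 : 0 < Y := by
      obtain ⟨k, hk⟩ := Function.ne_iff.mp hy
      exact lt_of_lt_of_le (pow_two_pos_of_ne_zero hk)
        (Finset.single_le_sum (f := fun j => y j ^ 2) (fun j _ => sq_nonneg _) (Finset.mem_univ k))
    set g : (Fin n → Fin n → ℝ) → ℝ := fun S =>
      (n : ℝ) * ∑ i, (((Matrix.of S).mulVec x i) ^ 2 / X) * (((Matrix.of S).mulVec y i) ^ 2 / Y)
      with hg
    set R : (Fin n → Fin n → ℝ) → ℝ := fun S =>
      ((n : ℝ) / 2) * ((∑ i, ((Matrix.of S).mulVec x i) ^ 4) / X ^ 2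
        + (∑ i, ((Matrix.of S).mulVec y i) ^ 4) / Y ^ 2) with hR
    have step1 : (∫ S : Fin n → Fin n → ℝ,
        deltaFP ((Matrix.of S).mulVec x) ((Matrix.of S).mulVec y) ∂μ) = ∫ S, g S ∂μ := by
      refine integral_congr_ae ?_
      filter_upwards [hsupp] with S hS
      rw [deltaFP, hg]
      rw [normpres hS x, normpres hS y]
    have hg_int : Integrable g μ := by
      refine (integrable_const ((n : ℝ) * (n : ℝ))).mono' ?_ ?_
      · refine (Measurable.const_mul (Finset.measurable_sum _ fun i _ => ?_) _).aestronglyMeasurable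
        exact (((meas_u x i).pow_const 2).div_const _).mul (((meas_u y i).pow_const 2).div_const _)
      · filter_upwards [bound_u x μ hsupp, bound_u y μ hsupp] with S hSx hSy
        have hterm : ∀ i, 0 ≤ (((Matrix.of S).mulVec x i) ^ 2 / X) * (((Matrix.of S).mulVec y i) ^ 2 / Y)
            ∧ (((Matrix.of S).mulVec x i) ^ 2 / X) * (((Matrix.of S).mulVec y i) ^ 2 / Y) ≤ 1 := by
          intro i
          have h1 : 0 ≤ ((Matrix.of S).mulVec x i) ^ 2 / X := by positivity
          have h2 : 0 ≤ ((Matrix.of S).mulVec y i) ^ 2 / Y := by positivity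
          have h3 : ((Matrix.of S).mulVec x i) ^ 2 / X ≤ 1 := by
            rw [div_le_one hX0]; exact hSx i
          have h4 : ((Matrix.of S).mulVec y i) ^ 2 / Y ≤ 1 := by
            rw [div_le_one hY0]; exact hSy i
          exact ⟨mul_nonneg h1 h2, mul_le_one₀ h3 h2 h4⟩
        have hsum : ∑ i, (((Matrix.of S).mulVec x i) ^ 2 / X) * (((Matrix.of S).mulVec y i) ^ 2 / Y)
            ≤ (n : ℝ) := by
          calc ∑ i, (((Matrix.of S).mulVec x i) ^ 2 / X) * (((Matrix.of S).mulVec y i) ^ 2 / Y)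
              ≤ ∑ _i : Fin n, (1:ℝ) := Finset.sum_le_sum fun i _ => (hterm i).2
            _ = (n : ℝ) := by simp
        have hsum0 : 0 ≤ ∑ i, (((Matrix.of S).mulVec x i) ^ 2 / X) * (((Matrix.of S).mulVec y i) ^ 2 / Y) :=
          Finset.sum_nonneg fun i _ => (hterm i).1
        rw [hg, Real.norm_eq_abs]
        dsimp only
        rw [abs_of_nonneg (by positivity)]
        exact mul_le_mul_of_nonneg_left hsum hnn
    have hFx_int : Integrable (fun S => (∑ i, ((Matrix.of S).mulVec x i) ^ 4) / X ^ 2) μ :=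
      (integrable_finset_sum _ fun i _ => integrable_u4 x μ hsupp i).div_const _
    have hFy_int : Integrable (fun S => (∑ i, ((Matrix.of S).mulVec y i) ^ 4) / Y ^ 2) μ :=
      (integrable_finset_sum _ fun i _ => integrable_u4 y μ hsupp i).div_const _
    have hFxy_int : Integrable (fun S => (∑ i, ((Matrix.of S).mulVec x i) ^ 4) / X ^ 2
        + (∑ i, ((Matrix.of S).mulVec y i) ^ 4) / Y ^ 2) μ := hFx_int.add hFy_int
    have hR_int : Integrable R μ := hFxy_int.const_mul _
    have hmono : ∀ S, g S ≤ R S := by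
      intro S
      rw [hg, hR]
      dsimp only
      have per : ∀ i, (((Matrix.of S).mulVec x i) ^ 2 / X) * (((Matrix.of S).mulVec y i) ^ 2 / Y)
          ≤ (((Matrix.of S).mulVec x i) ^ 4 / X ^ 2 + ((Matrix.of S).mulVec y i) ^ 4 / Y ^ 2) / 2 := by
        intro i
        have e1 : ((Matrix.of S).mulVec x i) ^ 4 / X ^ 2
            = (((Matrix.of S).mulVec x i) ^ 2 / X) * (((Matrix.of S).mulVec x i) ^ 2 / X) := by
          field_simp
        have e2 : ((Matrix.of S).mulVec y i) ^ 4 / Y ^ 2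
            = (((Matrix.of S).mulVec y i) ^ 2 / Y) * (((Matrix.of S).mulVec y i) ^ 2 / Y) := by
          field_simp
        rw [e1, e2]
        nlinarith [sq_nonneg (((Matrix.of S).mulVec x i) ^ 2 / X - ((Matrix.of S).mulVec y i) ^ 2 / Y)]
      calc (n : ℝ) * ∑ i, (((Matrix.of S).mulVec x i) ^ 2 / X) * (((Matrix.of S).mulVec y i) ^ 2 / Y)
          ≤ (n : ℝ) * ∑ i, (((Matrix.of S).mulVec x i) ^ 4 / X ^ 2
              + ((Matrix.of S).mulVec y i) ^ 4 / Y ^ 2) / 2 :=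
            mul_le_mul_of_nonneg_left (Finset.sum_le_sum fun i _ => per i) hnn
        _ = ((n : ℝ) / 2) * ((∑ i, ((Matrix.of S).mulVec x i) ^ 4) / X ^ 2
              + (∑ i, ((Matrix.of S).mulVec y i) ^ 4) / Y ^ 2) := by
            rw [← Finset.sum_div, Finset.sum_add_distrib, Finset.sum_div, Finset.sum_div]
            ring
    have step2 : ∫ S, g S ∂μ ≤ ∫ S, R S ∂μ := integral_mono hg_int hR_int hmono
    have step3 : ∫ S, R S ∂μ = 3 * (n : ℝ) / ((n : ℝ) + 2) := by
      rw [hR]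
      rw [integral_const_mul, integral_add hFx_int hFy_int, integral_div, integral_div,
        moment x μ hsupp hinv, moment y μ hsupp hinv]
      have hne : ((n : ℝ) + 2) ≠ 0 := by positivity
      field_simp
      ring
    rw [step1]
    rw [← step3]
    exact step2
  · rw [div_lt_iff₀ (by positivity)]
    linarith
end

section
/- Fix x, y ∈ ℝⁿ and γ_x, γ_y > 0. Let e_x, e_y be random vectors in ℝⁿ whose 2n coordinates are i.i.d. uniform on [−1/2, 1/2). Then 𝔼[(γ_x e_xᵀy + γ_y e_yᵀx + γ_x γ_y e_xᵀe_y)²] = (γ_x²/12)‖y‖² + (γ_y²/12)‖x‖² + n γ_x² γ_y² /144. Consequently, the distortion of INT-M absmax quantization with scales γ_x = 2^{−(M−1)}‖x‖_∞, γ_y = 2^{−(M−1)}‖y‖_∞ under the uniform-independent-noise model equals (‖x‖²‖y‖²/n)·(2^{−2M}/3)·[‖x‖_∞²/(‖x‖²/n) + ‖y‖_∞²/(‖y‖²/n) + (2^{−2M}/3)·(‖x‖_∞²/(‖x‖²/n))·(‖y‖_∞²/(‖y‖²/n))]. -/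
open MeasureTheory ProbabilityTheory

lemma unif_eq : ProbabilityTheory.cond volume (Set.Ico (-(1 / 2) : ℝ) (1 / 2))
    = volume.restrict (Set.Ico (-(1 / 2) : ℝ) (1 / 2)) := by
  rw [ProbabilityTheory.cond, Real.volume_Ico]
  norm_num

lemma unif_moment (p : ℕ) :
    (∫ t, t ^ p ∂(ProbabilityTheory.cond volume (Set.Ico (-(1 / 2) : ℝ) (1 / 2))))
      = ((1 / 2 : ℝ) ^ (p + 1) - (-(1 / 2) : ℝ) ^ (p + 1)) / (p + 1) := by
  rw [unif_eq, integral_Ico_eq_integral_Ioo, ← integral_Ioc_eq_integral_Ioo,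
    ← intervalIntegral.integral_of_le (by norm_num : (-(1 / 2) : ℝ) ≤ 1 / 2),
    integral_pow]

/-- Fix `x, y ∈ ℝⁿ` and `γ_x, γ_y > 0`.  Let `e_x, e_y` be random
vectors whose `2n` coordinates are i.i.d. uniform on `[−1/2, 1/2)`.  Then
`𝔼[(γ_x e_xᵀy + γ_y e_yᵀx + γ_x γ_y e_xᵀe_y)²]
  = (γ_x²/12)‖y‖² + (γ_y²/12)‖x‖² + n γ_x² γ_y²/144`.
Consequently, for the INT-M absmax scales `γ_x = 2^{−(M−1)}‖x‖_∞`,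
`γ_y = 2^{−(M−1)}‖y‖_∞` (with `x, y ≠ 0`), this expectation equals
`(‖x‖²‖y‖²/n)(2^{−2M}/3)[Δx + Δy + (2^{−2M}/3)·Δx·Δy]` where
`Δx = ‖x‖∞²/(‖x‖²/n)` and `Δy = ‖y‖∞²/(‖y‖²/n)`. -/
theorem stmt_12 (n : ℕ) (hn : 0 < n) (x y : Fin n → ℝ) (γx γy : ℝ)
    (hγx : 0 < γx) (hγy : 0 < γy)
    {Ω : Type*} [MeasurableSpace Ω] (P : Measure Ω) [IsProbabilityMeasure P]
    (ex ey : Fin n → Ω → ℝ)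
    (hmeas : ∀ i, Measurable (ex i) ∧ Measurable (ey i))
    (hindep : iIndepFun (Sum.elim ex ey : Fin n ⊕ Fin n → Ω → ℝ) P)
    (hlaw : ∀ i, Measure.map (ex i) P
              = ProbabilityTheory.cond volume (Set.Ico (-(1 / 2) : ℝ) (1 / 2))
            ∧ Measure.map (ey i) P
              = ProbabilityTheory.cond volume (Set.Ico (-(1 / 2) : ℝ) (1 / 2))) :
    (∫ ω, (γx * (∑ i, ex i ω * y i) + γy * (∑ i, ey i ω * x i)
            + γx * γy * (∑ i, ex i ω * ey i ω)) ^ 2 ∂P)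
      = γx ^ 2 / 12 * (∑ i, y i ^ 2) + γy ^ 2 / 12 * (∑ i, x i ^ 2)
        + (n : ℝ) * γx ^ 2 * γy ^ 2 / 144
    ∧ (∀ M : ℕ, x ≠ 0 → y ≠ 0 →
        γx = (2 : ℝ) ^ ((1 : ℤ) - M) * (⨆ i, |x i|) →
        γy = (2 : ℝ) ^ ((1 : ℤ) - M) * (⨆ i, |y i|) →
        (∫ ω, (γx * (∑ i, ex i ω * y i) + γy * (∑ i, ey i ω * x i)
                + γx * γy * (∑ i, ex i ω * ey i ω)) ^ 2 ∂P)
          = ((∑ i, x i ^ 2) * (∑ i, y i ^ 2) / (n : ℝ)) * ((2 : ℝ) ^ (-(2 * M : ℤ)) / 3)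
            * ((⨆ i, |x i|) ^ 2 / ((∑ i, x i ^ 2) / (n : ℝ))
               + (⨆ i, |y i|) ^ 2 / ((∑ i, y i ^ 2) / (n : ℝ))
               + ((2 : ℝ) ^ (-(2 * M : ℤ)) / 3)
                 * ((⨆ i, |x i|) ^ 2 / ((∑ i, x i ^ 2) / (n : ℝ)))
                 * ((⨆ i, |y i|) ^ 2 / ((∑ i, y i ^ 2) / (n : ℝ))))) := by
  classical
  set ν := ProbabilityTheory.cond volume (Set.Ico (-(1 / 2) : ℝ) (1 / 2)) with hν
  -- basic moments of ν
  have m0 : (∫ t, t ^ 0 ∂ν) = 1 := by rw [hν, unif_moment]; norm_num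
  have m1 : (∫ t, t ^ 1 ∂ν) = 0 := by rw [hν, unif_moment]; norm_num
  have m2 : (∫ t, t ^ 2 ∂ν) = 1 / 12 := by rw [hν, unif_moment]; norm_num
  -- measurability
  have hgmeas : ∀ k : Fin n ⊕ Fin n, Measurable ((Sum.elim ex ey : Fin n ⊕ Fin n → Ω → ℝ) k) := by
    rintro (i | i)
    exacts [(hmeas i).1, (hmeas i).2]
  -- a.e. bounds
  have hb : ∀ (f : Ω → ℝ), Measurable f →
      Measure.map f P = ν → ∀ᵐ ω ∂P, |f ω| ≤ 1 / 2 := by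
    intro f hf hmap
    have h1 : P (f ⁻¹' (Set.Ico (-(1 / 2) : ℝ) (1 / 2))ᶜ) = 0 := by
      rw [← Measure.map_apply hf measurableSet_Ico.compl, hmap, hν, unif_eq,
        Measure.restrict_apply measurableSet_Ico.compl]
      simp
    have h2 : ∀ᵐ ω ∂P, f ω ∈ Set.Ico (-(1 / 2) : ℝ) (1 / 2) := by
      rw [MeasureTheory.ae_iff]
      exact h1
    filter_upwards [h2] with ω hω
    rw [abs_le]
    exact ⟨hω.1, hω.2.le⟩
  have hbx : ∀ i, ∀ᵐ ω ∂P, |ex i ω| ≤ 1 / 2 := fun i => hb _ (hmeas i).1 (hlaw i).1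
  have hby : ∀ i, ∀ᵐ ω ∂P, |ey i ω| ≤ 1 / 2 := fun i => hb _ (hmeas i).2 (hlaw i).2
  -- independence of coordinates
  have hab : ∀ i, IndepFun (ex i) (ey i) P := by
    intro i
    have : ((Sum.inl i : Fin n ⊕ Fin n)) ≠ Sum.inr i := by simp
    exact hindep.indepFun this
  -- integrability of coordinate power products
  have hm : ∀ (i : Fin n) (p q : ℕ),
      Integrable (fun ω => ex i ω ^ p * ey i ω ^ q) P := by
    intro i p q
    refine (integrable_const (1 : ℝ)).mono'
      ((((hmeas i).1.pow_const p).mul ((hmeas i).2.pow_const q)).aestronglyMeasurable) ?_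
    filter_upwards [hbx i, hby i] with ω h1 h2
    rw [Real.norm_eq_abs, abs_mul, abs_pow, abs_pow]
    exact mul_le_one₀ (pow_le_one₀ (abs_nonneg _) (h1.trans (by norm_num)))
      (pow_nonneg (abs_nonneg _) _)
      (pow_le_one₀ (abs_nonneg _) (h2.trans (by norm_num)))
  -- moments of coordinate power products
  have hmom : ∀ (i : Fin n) (p q : ℕ),
      (∫ ω, ex i ω ^ p * ey i ω ^ q ∂P) = (∫ t, t ^ p ∂ν) * (∫ t, t ^ q ∂ν) := by
    intro i p q
    have hx' : (∫ ω, ex i ω ^ p ∂P) = ∫ t, t ^ p ∂ν := by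
      rw [← (hlaw i).1]
      exact (MeasureTheory.integral_map (hmeas i).1.aemeasurable
        ((measurable_id.pow_const p).aestronglyMeasurable)).symm
    have hy' : (∫ ω, ey i ω ^ q ∂P) = ∫ t, t ^ q ∂ν := by
      rw [← (hlaw i).2]
      exact (MeasureTheory.integral_map (hmeas i).2.aemeasurable
        ((measurable_id.pow_const q).aestronglyMeasurable)).symm
    have hI : (∫ ω, ex i ω ^ p * ey i ω ^ q ∂P)
        = (∫ ω, ex i ω ^ p ∂P) * (∫ ω, ey i ω ^ q ∂P) :=
      ((hab i).comp (measurable_id.pow_const p) (measurable_id.pow_const q)).integral_fun_mul_eq_mul_integral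
        (((hmeas i).1.pow_const p).aestronglyMeasurable)
        (((hmeas i).2.pow_const q).aestronglyMeasurable)
    rw [hI, hx', hy']
  -- the coordinate-wise summands
  set F : Fin n → Ω → ℝ := fun i ω =>
    γx * (ex i ω * y i) + γy * (ey i ω * x i) + γx * γy * (ex i ω * ey i ω) with hF
  have hFmeas : ∀ i, Measurable (F i) := by
    intro i
    exact ((((hmeas i).1.mul_const (y i)).const_mul γx).add
      (((hmeas i).2.mul_const (x i)).const_mul γy)).add
      (((hmeas i).1.mul (hmeas i).2).const_mul (γx * γy))
  set C : Fin n → ℝ := fun i => |γx * y i| + |γy * x i| + |γx * γy| with hC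
  have hbound : ∀ i, ∀ᵐ ω ∂P, |F i ω| ≤ C i := by
    intro i
    filter_upwards [hbx i, hby i] with ω h1 h2
    have e1 : |γx * (ex i ω * y i)| ≤ |γx * y i| := by
      rw [show γx * (ex i ω * y i) = γx * y i * ex i ω by ring, abs_mul]
      exact mul_le_of_le_one_right (abs_nonneg _) (h1.trans (by norm_num))
    have e2 : |γy * (ey i ω * x i)| ≤ |γy * x i| := by
      rw [show γy * (ey i ω * x i) = γy * x i * ey i ω by ring, abs_mul]
      exact mul_le_of_le_one_right (abs_nonneg _) (h2.trans (by norm_num))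
    have e3 : |γx * γy * (ex i ω * ey i ω)| ≤ |γx * γy| := by
      rw [abs_mul]
      refine mul_le_of_le_one_right (abs_nonneg _) ?_
      rw [abs_mul]
      have := mul_le_mul h1 h2 (abs_nonneg _) (by norm_num : (0:ℝ) ≤ 1/2)
      linarith
    calc |F i ω| ≤ |γx * (ex i ω * y i)| + |γy * (ey i ω * x i)|
          + |γx * γy * (ex i ω * ey i ω)| := abs_add_three _ _ _
      _ ≤ C i := by rw [hC]; dsimp only; linarith
  have hFFint : ∀ i j, Integrable (fun ω => F i ω * F j ω) P := by
    intro i j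
    refine (integrable_const (C i * C j)).mono'
      (((hFmeas i).mul (hFmeas j)).aestronglyMeasurable) ?_
    filter_upwards [hbound i, hbound j] with ω h1 h2
    rw [Real.norm_eq_abs, abs_mul]
    exact mul_le_mul h1 h2 (abs_nonneg _) ((abs_nonneg _).trans h1)
  -- mean of F i
  have hEF : ∀ i, (∫ ω, F i ω ∂P) = 0 := by
    intro i
    have e : F i = fun ω => γx * y i * (ex i ω ^ 1 * ey i ω ^ 0)
        + (γy * x i * (ex i ω ^ 0 * ey i ω ^ 1)
          + γx * γy * (ex i ω ^ 1 * ey i ω ^ 1)) := by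
      funext ω; rw [hF]; ring
    have I10 := (hm i 1 0).const_mul (γx * y i)
    have I01 := (hm i 0 1).const_mul (γy * x i)
    have I11 := (hm i 1 1).const_mul (γx * γy)
    have Ir : Integrable (fun ω => γy * x i * (ex i ω ^ 0 * ey i ω ^ 1)
        + γx * γy * (ex i ω ^ 1 * ey i ω ^ 1)) P := I01.add I11
    rw [e, integral_add I10 Ir, integral_add I01 I11,
      integral_const_mul _ _, integral_const_mul _ _, integral_const_mul _ _,
      hmom i 1 0, hmom i 0 1, hmom i 1 1, m1, m0]
    ring
  -- diagonal second moment
  have hdiag : ∀ i, (∫ ω, F i ω * F i ω ∂P)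
      = γx ^ 2 * y i ^ 2 / 12 + γy ^ 2 * x i ^ 2 / 12 + γx ^ 2 * γy ^ 2 / 144 := by
    intro i
    have e : (fun ω => F i ω * F i ω) = fun ω =>
        (γx * y i) ^ 2 * (ex i ω ^ 2 * ey i ω ^ 0)
        + ((γy * x i) ^ 2 * (ex i ω ^ 0 * ey i ω ^ 2)
        + ((γx * γy) ^ 2 * (ex i ω ^ 2 * ey i ω ^ 2)
        + (2 * (γx * y i) * (γy * x i) * (ex i ω ^ 1 * ey i ω ^ 1)
        + (2 * (γx * y i) * (γx * γy) * (ex i ω ^ 2 * ey i ω ^ 1)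
        + 2 * (γy * x i) * (γx * γy) * (ex i ω ^ 1 * ey i ω ^ 2))))) := by
      funext ω; rw [hF]; ring
    have J20 := (hm i 2 0).const_mul ((γx * y i) ^ 2)
    have J02 := (hm i 0 2).const_mul ((γy * x i) ^ 2)
    have J22 := (hm i 2 2).const_mul ((γx * γy) ^ 2)
    have J11 := (hm i 1 1).const_mul (2 * (γx * y i) * (γy * x i))
    have J21 := (hm i 2 1).const_mul (2 * (γx * y i) * (γx * γy))
    have J12 := (hm i 1 2).const_mul (2 * (γy * x i) * (γx * γy))
    have K5 : Integrable (fun ω => 2 * (γx * y i) * (γx * γy) * (ex i ω ^ 2 * ey i ω ^ 1)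
        + 2 * (γy * x i) * (γx * γy) * (ex i ω ^ 1 * ey i ω ^ 2)) P := J21.add J12
    have K4 : Integrable (fun ω => 2 * (γx * y i) * (γy * x i) * (ex i ω ^ 1 * ey i ω ^ 1)
        + (2 * (γx * y i) * (γx * γy) * (ex i ω ^ 2 * ey i ω ^ 1)
        + 2 * (γy * x i) * (γx * γy) * (ex i ω ^ 1 * ey i ω ^ 2))) P := J11.add K5
    have K3 : Integrable (fun ω => (γx * γy) ^ 2 * (ex i ω ^ 2 * ey i ω ^ 2)
        + (2 * (γx * y i) * (γy * x i) * (ex i ω ^ 1 * ey i ω ^ 1)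
        + (2 * (γx * y i) * (γx * γy) * (ex i ω ^ 2 * ey i ω ^ 1)
        + 2 * (γy * x i) * (γx * γy) * (ex i ω ^ 1 * ey i ω ^ 2)))) P := J22.add K4
    have K2 : Integrable (fun ω => (γy * x i) ^ 2 * (ex i ω ^ 0 * ey i ω ^ 2)
        + ((γx * γy) ^ 2 * (ex i ω ^ 2 * ey i ω ^ 2)
        + (2 * (γx * y i) * (γy * x i) * (ex i ω ^ 1 * ey i ω ^ 1)
        + (2 * (γx * y i) * (γx * γy) * (ex i ω ^ 2 * ey i ω ^ 1)
        + 2 * (γy * x i) * (γx * γy) * (ex i ω ^ 1 * ey i ω ^ 2))))) P := J02.add K3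
    rw [e, integral_add J20 K2, integral_add J02 K3, integral_add J22 K4,
      integral_add J11 K5, integral_add J21 J12,
      integral_const_mul _ _, integral_const_mul _ _, integral_const_mul _ _,
      integral_const_mul _ _, integral_const_mul _ _, integral_const_mul _ _,
      hmom i 2 0, hmom i 0 2, hmom i 2 2, hmom i 1 1, hmom i 2 1, hmom i 1 2,
      m0, m1, m2]
    ring
  -- off-diagonal vanishing
  have hoff : ∀ i j, i ≠ j → (∫ ω, F i ω * F j ω ∂P) = 0 := by
    intro i j hij
    have h4 := hindep.indepFun_prodMk_prodMk hgmeas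
      (Sum.inl i) (Sum.inr i) (Sum.inl j) (Sum.inr j)
      (by simp [hij]) (by simp) (by simp) (by simp [hij])
    have hφ : ∀ k : Fin n, Measurable (fun p : ℝ × ℝ =>
        γx * (p.1 * y k) + γy * (p.2 * x k) + γx * γy * (p.1 * p.2)) := by
      intro k; fun_prop
    have hIF : IndepFun (F i) (F j) P := h4.comp (hφ i) (hφ j)
    rw [hIF.integral_fun_mul_eq_mul_integral (hFmeas i).aestronglyMeasurable (hFmeas j).aestronglyMeasurable,
      hEF i, hEF j, mul_zero]
  -- the key identity
  have key : (∫ ω, (γx * (∑ i, ex i ω * y i) + γy * (∑ i, ey i ω * x i)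
            + γx * γy * (∑ i, ex i ω * ey i ω)) ^ 2 ∂P)
      = γx ^ 2 / 12 * (∑ i, y i ^ 2) + γy ^ 2 / 12 * (∑ i, x i ^ 2)
        + (n : ℝ) * γx ^ 2 * γy ^ 2 / 144 := by
    have e : ∀ ω : Ω, γx * (∑ i, ex i ω * y i) + γy * (∑ i, ey i ω * x i)
        + γx * γy * (∑ i, ex i ω * ey i ω) = ∑ i, F i ω := by
      intro ω
      rw [Finset.mul_sum, Finset.mul_sum, Finset.mul_sum,
        ← Finset.sum_add_distrib, ← Finset.sum_add_distrib]
    have e2 : ∀ ω : Ω, (∑ i, F i ω) ^ 2 = ∑ i, ∑ j, F i ω * F j ω := by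
      intro ω; rw [sq, Finset.sum_mul_sum]
    calc (∫ ω, (γx * (∑ i, ex i ω * y i) + γy * (∑ i, ey i ω * x i)
            + γx * γy * (∑ i, ex i ω * ey i ω)) ^ 2 ∂P)
        = ∫ ω, ∑ i, ∑ j, F i ω * F j ω ∂P := by
          congr 1; funext ω; rw [e ω, e2 ω]
      _ = ∑ i, ∑ j, ∫ ω, F i ω * F j ω ∂P := by
          rw [integral_finset_sum _
            (fun i _ => integrable_finset_sum _ (fun j _ => hFFint i j))]
          exact Finset.sum_congr rfl fun i _ =>
            integral_finset_sum _ (fun j _ => hFFint i j)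
      _ = ∑ i, (γx ^ 2 * y i ^ 2 / 12 + γy ^ 2 * x i ^ 2 / 12
            + γx ^ 2 * γy ^ 2 / 144) := by
          refine Finset.sum_congr rfl fun i _ => ?_
          rw [Finset.sum_eq_single_of_mem i (Finset.mem_univ i)
            (fun j _ hji => hoff i j (Ne.symm hji)), hdiag i]
      _ = γx ^ 2 / 12 * (∑ i, y i ^ 2) + γy ^ 2 / 12 * (∑ i, x i ^ 2)
            + (n : ℝ) * γx ^ 2 * γy ^ 2 / 144 := by
          rw [Finset.sum_add_distrib, Finset.sum_add_distrib, Finset.sum_const,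
            Finset.card_univ, Fintype.card_fin, nsmul_eq_mul]
          have h1 : ∑ i, γx ^ 2 * y i ^ 2 / 12 = γx ^ 2 / 12 * ∑ i, y i ^ 2 := by
            rw [Finset.mul_sum]; exact Finset.sum_congr rfl fun i _ => by ring
          have h2 : ∑ i, γy ^ 2 * x i ^ 2 / 12 = γy ^ 2 / 12 * ∑ i, x i ^ 2 := by
            rw [Finset.mul_sum]; exact Finset.sum_congr rfl fun i _ => by ring
          rw [h1, h2]; ring
  refine ⟨key, ?_⟩
  intro M hx0 hy0 hgx hgy
  rw [key, hgx, hgy]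
  have hX : 0 < ∑ i, x i ^ 2 := by
    obtain ⟨i0, hi0⟩ := Function.ne_iff.mp hx0
    exact Finset.sum_pos' (fun i _ => sq_nonneg _) ⟨i0, Finset.mem_univ _, (sq_nonneg _).lt_of_ne (Ne.symm (pow_ne_zero 2 hi0))⟩
  have hY : 0 < ∑ i, y i ^ 2 := by
    obtain ⟨i0, hi0⟩ := Function.ne_iff.mp hy0
    exact Finset.sum_pos' (fun i _ => sq_nonneg _) ⟨i0, Finset.mem_univ _, (sq_nonneg _).lt_of_ne (Ne.symm (pow_ne_zero 2 hi0))⟩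
  have hn' : (0 : ℝ) < n := by exact_mod_cast hn
  have h2p : ((2 : ℝ) ^ ((1 : ℤ) - M)) ^ 2 = 4 * (2 : ℝ) ^ (-(2 * M : ℤ)) := by
    rw [sq, ← zpow_add₀ (by norm_num : (2:ℝ) ≠ 0),
      show ((1 : ℤ) - M) + ((1 : ℤ) - M) = 2 + (-(2 * M : ℤ)) by ring,
      zpow_add₀ (by norm_num : (2:ℝ) ≠ 0)]
    norm_num
  rw [mul_pow, mul_pow, h2p]
  have hq : (0 : ℝ) < (2 : ℝ) ^ (-(2 * M : ℤ)) := by positivity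
  field_simp
  ring
end

section
/- (FP inner-product distortion under the infinite-exponent independent noise model.) Fix x, y ∈ ℝⁿ and an integer M ≥ 0. For each i ∈ [n], let e_i, f_i be uniform on 2^{−M}·[−1/2, 1/2), and let ρ_i, σ_i be distributed as 2^{−U} with U uniform on [0,1); assume that all 4n random variables {e_i, f_i, ρ_i, σ_i}_{i∈[n]} are mutually independent. Let e_FP = ∑_{i=1}^n x_i y_i (ρ_i e_i + σ_i f_i + ρ_i σ_i e_i f_i). Then 𝔼[e_FP²] = (2^{−2M}/12)·(∑_{i=1}^n x_i² y_i²)·(2C + C²·2^{−2M}/12), where C = 𝔼[2^{−2U}], U ~ Uniform[0,1). -/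
open MeasureTheory ProbabilityTheory

set_option linter.unusedSectionVars false

section Aux

variable {Ω : Type*} [MeasurableSpace Ω] {P : Measure Ω} [IsProbabilityMeasure P]

lemma aux_bdd_integrable {X : Ω → ℝ} (hX : Measurable X) {c : ℝ}
    (hc : ∀ᵐ ω ∂P, |X ω| ≤ c) : Integrable X P :=
  memLp_one_iff_integrable.mp <|
    MemLp.of_bound hX.aestronglyMeasurable c (by simpa [Real.norm_eq_abs] using hc)

lemma aux_master {ι : Type*} {g : ι → Ω → ℝ} (hg : ∀ k, Measurable (g k))
    (hindep : iIndepFun g P)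
    (hb : ∀ k, ∃ c, ∀ᵐ ω ∂P, |g k ω| ≤ c) (t : Finset ι) :
    Integrable (fun ω => ∏ k ∈ t, g k ω) P ∧
      ∫ ω, ∏ k ∈ t, g k ω ∂P = ∏ k ∈ t, ∫ ω, g k ω ∂P := by
  classical
  induction t using Finset.induction_on with
  | empty => simp
  | @insert a u ha ih =>
    obtain ⟨c, hc⟩ := hb a
    have hInta : Integrable (g a) P := aux_bdd_integrable (hg a) hc
    have hIndep2 : IndepFun (∏ j ∈ u, g j) (g a) P :=
      hindep.indepFun_finsetProd_of_notMem hg ha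
    have hprodeq : (∏ j ∈ u, g j) = fun ω => ∏ k ∈ u, g k ω := by
      funext ω; simp
    have hIntu : Integrable (∏ j ∈ u, g j) P := by rw [hprodeq]; exact ih.1
    have hIntmul : Integrable ((∏ j ∈ u, g j) * g a) P :=
      hIndep2.integrable_mul hIntu hInta
    have hkey : (fun ω => ∏ k ∈ insert a u, g k ω) = (∏ j ∈ u, g j) * g a := by
      funext ω
      simp [Finset.prod_insert ha, mul_comm]
    constructor
    · rw [hkey]; exact hIntmul
    · rw [hkey, hIndep2.integral_mul_eq_mul_integral hIntu.aestronglyMeasurable hInta.aestronglyMeasurable, Finset.prod_insert ha,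
        hprodeq, ih.2]
      ring

lemma aux_cond_integral (a b : ℝ) (hab : a < b) (φ : ℝ → ℝ) :
    ∫ z, φ z ∂(ProbabilityTheory.cond volume (Set.Ico a b))
      = (b - a)⁻¹ * ∫ x in a..b, φ x := by
  rw [ProbabilityTheory.cond, integral_smul_measure, Real.volume_Ico,
    ENNReal.toReal_inv, ENNReal.toReal_ofReal (by linarith),
    MeasureTheory.integral_Ico_eq_integral_Ioo, ← MeasureTheory.integral_Ioc_eq_integral_Ioo,
    ← intervalIntegral.integral_of_le hab.le, smul_eq_mul]

lemma aux_ae_mem {X : Ω → ℝ} (hX : Measurable X) {S : Set ℝ} (hS : MeasurableSet S)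
    (h1 : Measure.map X P S = 1) : ∀ᵐ ω ∂P, X ω ∈ S := by
  have h : P (X ⁻¹' S) = 1 := by rwa [← Measure.map_apply hX hS]
  have h2 : P (X ⁻¹' S)ᶜ = 0 := by
    rw [measure_compl (hX hS) (measure_ne_top _ _), h, measure_univ]; simp
  rw [ae_iff]
  convert h2 using 2
  rfl

lemma aux_indep_quad {ι : Type*} [DecidableEq ι] {g : ι → Ω → ℝ}
    (hg : ∀ k, Measurable (g k))
    (hindep : iIndepFun g P)
    (a b c d a' b' c' d' : ι)
    (hdisj : Disjoint ({a, b, c, d} : Finset ι) ({a', b', c', d'} : Finset ι)) :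
    IndepFun
      (fun ω => g c ω * g a ω + g d ω * g b ω + g c ω * g d ω * g a ω * g b ω)
      (fun ω => g c' ω * g a' ω + g d' ω * g b' ω + g c' ω * g d' ω * g a' ω * g b' ω)
      P := by
  have h := hindep.indepFun_finset {a, b, c, d} {a', b', c', d'} hdisj hg
  have hφm : ∀ (a b c d : ι),
      Measurable (fun v : ((k : ({a, b, c, d} : Finset ι)) → ℝ) =>
        v ⟨c, by simp⟩ * v ⟨a, by simp⟩ + v ⟨d, by simp⟩ * v ⟨b, by simp⟩
          + v ⟨c, by simp⟩ * v ⟨d, by simp⟩ * v ⟨a, by simp⟩ * v ⟨b, by simp⟩) := by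
    intro a b c d
    fun_prop
  exact h.comp (hφm a b c d) (hφm a' b' c' d')

end Aux

/-- **FP inner-product distortion under IEIN.**  Fix `x, y ∈ ℝⁿ`, `M ∈ ℕ`.
For each `i` let `e_i, f_i` be uniform on `2^{−M}[−1/2, 1/2)` and `ρ_i, σ_i` distributed
as `2^{−U}` with `U` uniform on `[0,1)`, all `4n` variables mutually independent.  With
`e_FP = ∑ᵢ xᵢ yᵢ (ρᵢ eᵢ + σᵢ fᵢ + ρᵢ σᵢ eᵢ fᵢ)`, one has
`𝔼[e_FP²] = (2^{−2M}/12)·(∑ᵢ xᵢ² yᵢ²)·(2C + C²·2^{−2M}/12)` with `C = 𝔼[2^{−2U}]`. -/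
theorem stmt_13 (n : ℕ) (x y : Fin n → ℝ) (M : ℕ)
    {Ω : Type*} [MeasurableSpace Ω] (P : Measure Ω) [IsProbabilityMeasure P]
    (e f r s : Fin n → Ω → ℝ)
    (hmeas : ∀ i, Measurable (e i) ∧ Measurable (f i) ∧ Measurable (r i) ∧ Measurable (s i))
    (hindep : iIndepFun
      (Sum.elim (Sum.elim e f) (Sum.elim r s) : (Fin n ⊕ Fin n) ⊕ (Fin n ⊕ Fin n) → Ω → ℝ) P)
    (hlawe : ∀ i, Measure.map (e i) P =
      ProbabilityTheory.cond volume
        (Set.Ico (-((2 : ℝ) ^ (-(M : ℤ))) / 2) (((2 : ℝ) ^ (-(M : ℤ))) / 2)))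
    (hlawf : ∀ i, Measure.map (f i) P =
      ProbabilityTheory.cond volume
        (Set.Ico (-((2 : ℝ) ^ (-(M : ℤ))) / 2) (((2 : ℝ) ^ (-(M : ℤ))) / 2)))
    (hlawr : ∀ i, Measure.map (r i) P =
      Measure.map (fun u : ℝ => (2 : ℝ) ^ (-u))
        (ProbabilityTheory.cond volume (Set.Ico (0 : ℝ) 1)))
    (hlaws : ∀ i, Measure.map (s i) P =
      Measure.map (fun u : ℝ => (2 : ℝ) ^ (-u))
        (ProbabilityTheory.cond volume (Set.Ico (0 : ℝ) 1)))
    (C : ℝ)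
    (hC : C = ∫ u, (2 : ℝ) ^ (-(2 * u)) ∂(ProbabilityTheory.cond volume (Set.Ico (0 : ℝ) 1))) :
    (∫ ω, (∑ i, x i * y i *
        (r i ω * e i ω + s i ω * f i ω + r i ω * s i ω * e i ω * f i ω)) ^ 2 ∂P)
      = ((2 : ℝ) ^ (-(2 * M : ℤ)) / 12) * (∑ i, x i ^ 2 * y i ^ 2)
        * (2 * C + C ^ 2 * (2 : ℝ) ^ (-(2 * M : ℤ)) / 12) := by
  classical
  have hW : (0:ℝ) < (2 : ℝ) ^ (-(M : ℤ)) := by positivity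
  set W : ℝ := (2 : ℝ) ^ (-(M : ℤ)) with hWdef
  set g : ((Fin n ⊕ Fin n) ⊕ (Fin n ⊕ Fin n)) → Ω → ℝ :=
    Sum.elim (Sum.elim e f) (Sum.elim r s) with hgdef
  have hindep' : iIndepFun g P := hindep
  have hme : ∀ i, Measurable (e i) := fun i => (hmeas i).1
  have hmf : ∀ i, Measurable (f i) := fun i => (hmeas i).2.1
  have hmr : ∀ i, Measurable (r i) := fun i => (hmeas i).2.2.1
  have hms : ∀ i, Measurable (s i) := fun i => (hmeas i).2.2.2
  have hg : ∀ k, Measurable (g k) := by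
    rintro ((i | i) | (i | i))
    exacts [hme i, hmf i, hmr i, hms i]
  -- a.e. bounds
  have hvol_ne0 : volume (Set.Ico (-W/2) (W/2)) ≠ 0 := by
    rw [Real.volume_Ico]
    simp only [ne_eq, ENNReal.ofReal_eq_zero, not_le]
    linarith
  have hvol_ne_top : volume (Set.Ico (-W/2) (W/2)) ≠ ⊤ := measure_Ico_lt_top.ne
  have hbe : ∀ i, ∀ᵐ ω ∂P, e i ω ∈ Set.Ico (-W/2) (W/2) := fun i =>
    aux_ae_mem (hme i) measurableSet_Ico
      (by rw [hlawe i]; exact ProbabilityTheory.cond_apply_self hvol_ne0 hvol_ne_top)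
  have hbf : ∀ i, ∀ᵐ ω ∂P, f i ω ∈ Set.Ico (-W/2) (W/2) := fun i =>
    aux_ae_mem (hmf i) measurableSet_Ico
      (by rw [hlawf i]; exact ProbabilityTheory.cond_apply_self hvol_ne0 hvol_ne_top)
  have hgm2 : Measurable (fun u : ℝ => (2:ℝ) ^ (-u)) := by
    have huu : (fun u : ℝ => (2:ℝ) ^ (-u)) = fun u => Real.exp (Real.log 2 * (-u)) := by
      funext u; rw [Real.rpow_def_of_pos (by norm_num)]
    rw [huu]
    exact (Real.continuous_exp.comp (continuous_const.mul continuous_neg)).measurable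
  have hmap_r : Measure.map (fun u : ℝ => (2:ℝ) ^ (-u))
      (ProbabilityTheory.cond volume (Set.Ico (0:ℝ) 1)) (Set.Icc (1/2 : ℝ) 1) = 1 := by
    rw [Measure.map_apply hgm2 measurableSet_Icc]
    have hsub : Set.Ico (0:ℝ) 1 ⊆ (fun u : ℝ => (2:ℝ) ^ (-u)) ⁻¹' Set.Icc (1/2 : ℝ) 1 := by
      intro u hu
      simp only [Set.mem_preimage, Set.mem_Icc]
      constructor
      · have h1 : (2:ℝ) ^ (-(1:ℝ)) ≤ (2:ℝ) ^ (-u) :=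
          Real.rpow_le_rpow_of_exponent_le (by norm_num) (by linarith [hu.2])
        rw [Real.rpow_neg_one] at h1
        norm_num at h1 ⊢
        linarith
      · exact Real.rpow_le_one_of_one_le_of_nonpos (by norm_num) (by linarith [hu.1])
    have hPM : IsProbabilityMeasure (ProbabilityTheory.cond volume (Set.Ico (0:ℝ) 1)) :=
      ProbabilityTheory.cond_isProbabilityMeasure_of_finite
        (by rw [Real.volume_Ico]; norm_num) measure_Ico_lt_top.ne
    have h01 : ProbabilityTheory.cond volume (Set.Ico (0:ℝ) 1) (Set.Ico (0:ℝ) 1) = 1 := by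
      apply ProbabilityTheory.cond_apply_self
      · rw [Real.volume_Ico]; norm_num
      · exact measure_Ico_lt_top.ne
    refine le_antisymm prob_le_one ?_
    rw [← h01]
    exact measure_mono hsub
  have hbr : ∀ i, ∀ᵐ ω ∂P, r i ω ∈ Set.Icc (1/2 : ℝ) 1 := fun i =>
    aux_ae_mem (hmr i) measurableSet_Icc (by rw [hlawr i]; exact hmap_r)
  have hbs : ∀ i, ∀ᵐ ω ∂P, s i ω ∈ Set.Icc (1/2 : ℝ) 1 := fun i =>
    aux_ae_mem (hms i) measurableSet_Icc (by rw [hlaws i]; exact hmap_r)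
  have hBe : ∀ i, ∀ᵐ ω ∂P, |e i ω| ≤ W/2 := fun i =>
    (hbe i).mono fun ω hω => abs_le.2 ⟨by linarith [hω.1], hω.2.le⟩
  have hBf : ∀ i, ∀ᵐ ω ∂P, |f i ω| ≤ W/2 := fun i =>
    (hbf i).mono fun ω hω => abs_le.2 ⟨by linarith [hω.1], hω.2.le⟩
  have hBr : ∀ i, ∀ᵐ ω ∂P, |r i ω| ≤ 1 := fun i =>
    (hbr i).mono fun ω hω => abs_le.2 ⟨by linarith [hω.1], hω.2⟩
  have hBs : ∀ i, ∀ᵐ ω ∂P, |s i ω| ≤ 1 := fun i =>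
    (hbs i).mono fun ω hω => abs_le.2 ⟨by linarith [hω.1], hω.2⟩
  have hball : ∀ k, ∀ᵐ ω ∂P, |g k ω| ≤ max (W/2) 1 := by
    rintro ((i | i) | (i | i))
    · filter_upwards [hBe i] with ω h; exact h.trans (le_max_left _ _)
    · filter_upwards [hBf i] with ω h; exact h.trans (le_max_left _ _)
    · filter_upwards [hBr i] with ω h; exact h.trans (le_max_right _ _)
    · filter_upwards [hBs i] with ω h; exact h.trans (le_max_right _ _)
  -- master factorization
  have masterG : ∀ (pp : ((Fin n ⊕ Fin n) ⊕ (Fin n ⊕ Fin n)) → ℕ)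
      (t : Finset ((Fin n ⊕ Fin n) ⊕ (Fin n ⊕ Fin n))),
      Integrable (fun ω => ∏ k ∈ t, (g k ω) ^ (pp k)) P ∧
        ∫ ω, ∏ k ∈ t, (g k ω) ^ (pp k) ∂P = ∏ k ∈ t, ∫ ω, (g k ω) ^ (pp k) ∂P := by
    intro pp t
    refine aux_master (g := fun k ω => (g k ω) ^ (pp k))
      (fun k => (hg k).pow_const (pp k))
      (hindep'.comp (fun k z => z ^ pp k) (fun k => measurable_id.pow_const (pp k))) ?_ t
    intro k
    refine ⟨(max (W/2) 1) ^ (pp k), ?_⟩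
    filter_upwards [hball k] with ω h
    rw [abs_pow]
    exact pow_le_pow_left₀ (abs_nonneg _) h _
  -- moments
  have law_int : ∀ (X : Ω → ℝ), Measurable X → ∀ (φ : ℝ → ℝ), Measurable φ →
      ∫ ω, φ (X ω) ∂P = ∫ z, φ z ∂(Measure.map X P) := fun X hX φ hφ =>
    (integral_map hX.aemeasurable hφ.aestronglyMeasurable).symm
  have habW : -W/2 < W/2 := by linarith
  have key_e1 : ∀ i, ∫ ω, e i ω ∂P = 0 := by
    intro i
    rw [law_int (e i) (hme i) (fun z => z) measurable_id, hlawe i,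
      aux_cond_integral _ _ habW, integral_id]
    rw [show ((W/2)^2 - (-W/2)^2 : ℝ) = 0 by ring]
    simp
  have key_f1 : ∀ i, ∫ ω, f i ω ∂P = 0 := by
    intro i
    rw [law_int (f i) (hmf i) (fun z => z) measurable_id, hlawf i,
      aux_cond_integral _ _ habW, integral_id]
    rw [show ((W/2)^2 - (-W/2)^2 : ℝ) = 0 by ring]
    simp
  have key_e2 : ∀ i, ∫ ω, (e i ω) ^ 2 ∂P = W^2/12 := by
    intro i
    rw [law_int (e i) (hme i) (fun z => z^2) (measurable_id.pow_const 2), hlawe i,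
      aux_cond_integral _ _ habW, integral_pow]
    rw [show (W/2 - -W/2 : ℝ) = W by ring]
    field_simp
    ring
  have key_f2 : ∀ i, ∫ ω, (f i ω) ^ 2 ∂P = W^2/12 := by
    intro i
    rw [law_int (f i) (hmf i) (fun z => z^2) (measurable_id.pow_const 2), hlawf i,
      aux_cond_integral _ _ habW, integral_pow]
    rw [show (W/2 - -W/2 : ℝ) = W by ring]
    field_simp
    ring
  have key_rpow : ∀ u : ℝ, ((2:ℝ) ^ (-u)) ^ (2:ℕ) = (2:ℝ) ^ (-(2*u)) := by
    intro u
    rw [← Real.rpow_natCast ((2:ℝ) ^ (-u)) 2, ← Real.rpow_mul (by norm_num : (0:ℝ) ≤ 2)]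
    norm_num
    ring_nf
  have key_r2 : ∀ i, ∫ ω, (r i ω) ^ 2 ∂P = C := by
    intro i
    rw [law_int (r i) (hmr i) (fun z => z^2) (measurable_id.pow_const 2), hlawr i,
      MeasureTheory.integral_map (f := fun z : ℝ => z ^ 2) hgm2.aemeasurable ((measurable_id.pow_const 2).aestronglyMeasurable), hC]
    congr 1
    funext u
    exact key_rpow u
  have key_s2 : ∀ i, ∫ ω, (s i ω) ^ 2 ∂P = C := by
    intro i
    rw [law_int (s i) (hms i) (fun z => z^2) (measurable_id.pow_const 2), hlaws i,
      MeasureTheory.integral_map (f := fun z : ℝ => z ^ 2) hgm2.aemeasurable ((measurable_id.pow_const 2).aestronglyMeasurable), hC]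
    congr 1
    funext u
    exact key_rpow u
  have hfun_m1 : ∀ i : Fin n,
      (fun ω => ∏ k ∈ ({Sum.inr (Sum.inl i), Sum.inl (Sum.inl i)} : Finset ((Fin n ⊕ Fin n) ⊕ (Fin n ⊕ Fin n))), (g k ω) ^ ((fun _ => 1) k))
        = fun ω => r i ω * e i ω := by
    intro i; funext ω
    rw [Finset.prod_pair (by simp)]
    simp only [hgdef, Sum.elim_inl, Sum.elim_inr, pow_one]
  have hint_m1 : ∀ i : Fin n, Integrable (fun ω => r i ω * e i ω) P := by
    intro i
    rw [← hfun_m1 i]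
    exact (masterG (fun _ => 1) ({Sum.inr (Sum.inl i), Sum.inl (Sum.inl i)} : Finset ((Fin n ⊕ Fin n) ⊕ (Fin n ⊕ Fin n)))).1
  have hval_m1 : ∀ i : Fin n, ∫ ω, r i ω * e i ω ∂P = 0 := by
    intro i
    rw [← hfun_m1 i, (masterG (fun _ => 1) ({Sum.inr (Sum.inl i), Sum.inl (Sum.inl i)} : Finset ((Fin n ⊕ Fin n) ⊕ (Fin n ⊕ Fin n)))).2]
    rw [Finset.prod_pair (by simp)]
    simp only [hgdef, Sum.elim_inl, Sum.elim_inr, pow_one]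
    rw [key_e1 i, mul_zero]
  have hfun_m2 : ∀ i : Fin n,
      (fun ω => ∏ k ∈ ({Sum.inr (Sum.inr i), Sum.inl (Sum.inr i)} : Finset ((Fin n ⊕ Fin n) ⊕ (Fin n ⊕ Fin n))), (g k ω) ^ ((fun _ => 1) k))
        = fun ω => s i ω * f i ω := by
    intro i; funext ω
    rw [Finset.prod_pair (by simp)]
    simp only [hgdef, Sum.elim_inl, Sum.elim_inr, pow_one]
  have hint_m2 : ∀ i : Fin n, Integrable (fun ω => s i ω * f i ω) P := by
    intro i
    rw [← hfun_m2 i]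
    exact (masterG (fun _ => 1) ({Sum.inr (Sum.inr i), Sum.inl (Sum.inr i)} : Finset ((Fin n ⊕ Fin n) ⊕ (Fin n ⊕ Fin n)))).1
  have hval_m2 : ∀ i : Fin n, ∫ ω, s i ω * f i ω ∂P = 0 := by
    intro i
    rw [← hfun_m2 i, (masterG (fun _ => 1) ({Sum.inr (Sum.inr i), Sum.inl (Sum.inr i)} : Finset ((Fin n ⊕ Fin n) ⊕ (Fin n ⊕ Fin n)))).2]
    rw [Finset.prod_pair (by simp)]
    simp only [hgdef, Sum.elim_inl, Sum.elim_inr, pow_one]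
    rw [key_f1 i, mul_zero]
  have hfun_m3 : ∀ i : Fin n,
      (fun ω => ∏ k ∈ ({Sum.inr (Sum.inl i), Sum.inr (Sum.inr i), Sum.inl (Sum.inl i), Sum.inl (Sum.inr i)} : Finset ((Fin n ⊕ Fin n) ⊕ (Fin n ⊕ Fin n))), (g k ω) ^ ((fun _ => 1) k))
        = fun ω => r i ω * (s i ω * (e i ω * f i ω)) := by
    intro i; funext ω
    rw [Finset.prod_insert (by simp), Finset.prod_insert (by simp), Finset.prod_pair (by simp)]
    simp only [hgdef, Sum.elim_inl, Sum.elim_inr, pow_one]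
  have hint_m3 : ∀ i : Fin n, Integrable (fun ω => r i ω * (s i ω * (e i ω * f i ω))) P := by
    intro i
    rw [← hfun_m3 i]
    exact (masterG (fun _ => 1) ({Sum.inr (Sum.inl i), Sum.inr (Sum.inr i), Sum.inl (Sum.inl i), Sum.inl (Sum.inr i)} : Finset ((Fin n ⊕ Fin n) ⊕ (Fin n ⊕ Fin n)))).1
  have hval_m3 : ∀ i : Fin n, ∫ ω, r i ω * (s i ω * (e i ω * f i ω)) ∂P = 0 := by
    intro i
    rw [← hfun_m3 i, (masterG (fun _ => 1) ({Sum.inr (Sum.inl i), Sum.inr (Sum.inr i), Sum.inl (Sum.inl i), Sum.inl (Sum.inr i)} : Finset ((Fin n ⊕ Fin n) ⊕ (Fin n ⊕ Fin n)))).2]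
    rw [Finset.prod_insert (by simp), Finset.prod_insert (by simp), Finset.prod_pair (by simp)]
    simp only [hgdef, Sum.elim_inl, Sum.elim_inr, pow_one]
    rw [key_e1 i]; ring
  have hfun_m4 : ∀ i : Fin n,
      (fun ω => ∏ k ∈ ({Sum.inr (Sum.inl i), Sum.inl (Sum.inl i)} : Finset ((Fin n ⊕ Fin n) ⊕ (Fin n ⊕ Fin n))), (g k ω) ^ ((fun _ => 2) k))
        = fun ω => (r i ω)^2 * (e i ω)^2 := by
    intro i; funext ω
    rw [Finset.prod_pair (by simp)]
    simp only [hgdef, Sum.elim_inl, Sum.elim_inr, pow_one]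
  have hint_m4 : ∀ i : Fin n, Integrable (fun ω => (r i ω)^2 * (e i ω)^2) P := by
    intro i
    rw [← hfun_m4 i]
    exact (masterG (fun _ => 2) ({Sum.inr (Sum.inl i), Sum.inl (Sum.inl i)} : Finset ((Fin n ⊕ Fin n) ⊕ (Fin n ⊕ Fin n)))).1
  have hval_m4 : ∀ i : Fin n, ∫ ω, (r i ω)^2 * (e i ω)^2 ∂P = C * (W^2/12) := by
    intro i
    rw [← hfun_m4 i, (masterG (fun _ => 2) ({Sum.inr (Sum.inl i), Sum.inl (Sum.inl i)} : Finset ((Fin n ⊕ Fin n) ⊕ (Fin n ⊕ Fin n)))).2]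
    rw [Finset.prod_pair (by simp)]
    simp only [hgdef, Sum.elim_inl, Sum.elim_inr, pow_one]
    rw [key_r2 i, key_e2 i]
  have hfun_m5 : ∀ i : Fin n,
      (fun ω => ∏ k ∈ ({Sum.inr (Sum.inr i), Sum.inl (Sum.inr i)} : Finset ((Fin n ⊕ Fin n) ⊕ (Fin n ⊕ Fin n))), (g k ω) ^ ((fun _ => 2) k))
        = fun ω => (s i ω)^2 * (f i ω)^2 := by
    intro i; funext ω
    rw [Finset.prod_pair (by simp)]
    simp only [hgdef, Sum.elim_inl, Sum.elim_inr, pow_one]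
  have hint_m5 : ∀ i : Fin n, Integrable (fun ω => (s i ω)^2 * (f i ω)^2) P := by
    intro i
    rw [← hfun_m5 i]
    exact (masterG (fun _ => 2) ({Sum.inr (Sum.inr i), Sum.inl (Sum.inr i)} : Finset ((Fin n ⊕ Fin n) ⊕ (Fin n ⊕ Fin n)))).1
  have hval_m5 : ∀ i : Fin n, ∫ ω, (s i ω)^2 * (f i ω)^2 ∂P = C * (W^2/12) := by
    intro i
    rw [← hfun_m5 i, (masterG (fun _ => 2) ({Sum.inr (Sum.inr i), Sum.inl (Sum.inr i)} : Finset ((Fin n ⊕ Fin n) ⊕ (Fin n ⊕ Fin n)))).2]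
    rw [Finset.prod_pair (by simp)]
    simp only [hgdef, Sum.elim_inl, Sum.elim_inr, pow_one]
    rw [key_s2 i, key_f2 i]
  have hfun_m6 : ∀ i : Fin n,
      (fun ω => ∏ k ∈ ({Sum.inr (Sum.inl i), Sum.inr (Sum.inr i), Sum.inl (Sum.inl i), Sum.inl (Sum.inr i)} : Finset ((Fin n ⊕ Fin n) ⊕ (Fin n ⊕ Fin n))), (g k ω) ^ ((fun _ => 2) k))
        = fun ω => (r i ω)^2 * ((s i ω)^2 * ((e i ω)^2 * (f i ω)^2)) := by
    intro i; funext ω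
    rw [Finset.prod_insert (by simp), Finset.prod_insert (by simp), Finset.prod_pair (by simp)]
    simp only [hgdef, Sum.elim_inl, Sum.elim_inr, pow_one]
  have hint_m6 : ∀ i : Fin n, Integrable (fun ω => (r i ω)^2 * ((s i ω)^2 * ((e i ω)^2 * (f i ω)^2))) P := by
    intro i
    rw [← hfun_m6 i]
    exact (masterG (fun _ => 2) ({Sum.inr (Sum.inl i), Sum.inr (Sum.inr i), Sum.inl (Sum.inl i), Sum.inl (Sum.inr i)} : Finset ((Fin n ⊕ Fin n) ⊕ (Fin n ⊕ Fin n)))).1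
  have hval_m6 : ∀ i : Fin n, ∫ ω, (r i ω)^2 * ((s i ω)^2 * ((e i ω)^2 * (f i ω)^2)) ∂P = C * (C * (W^2/12 * (W^2/12))) := by
    intro i
    rw [← hfun_m6 i, (masterG (fun _ => 2) ({Sum.inr (Sum.inl i), Sum.inr (Sum.inr i), Sum.inl (Sum.inl i), Sum.inl (Sum.inr i)} : Finset ((Fin n ⊕ Fin n) ⊕ (Fin n ⊕ Fin n)))).2]
    rw [Finset.prod_insert (by simp), Finset.prod_insert (by simp), Finset.prod_pair (by simp)]
    simp only [hgdef, Sum.elim_inl, Sum.elim_inr, pow_one]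
    rw [key_r2 i, key_s2 i, key_e2 i, key_f2 i]
  have hfun_m7 : ∀ i : Fin n,
      (fun ω => ∏ k ∈ ({Sum.inr (Sum.inl i), Sum.inr (Sum.inr i), Sum.inl (Sum.inl i), Sum.inl (Sum.inr i)} : Finset ((Fin n ⊕ Fin n) ⊕ (Fin n ⊕ Fin n))), (g k ω) ^ ((Sum.elim (Sum.elim (fun _ => 2) (fun _ => 1)) (Sum.elim (fun _ => 2) (fun _ => 1))) k))
        = fun ω => (r i ω)^2 * (s i ω * ((e i ω)^2 * f i ω)) := by
    intro i; funext ω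
    rw [Finset.prod_insert (by simp), Finset.prod_insert (by simp), Finset.prod_pair (by simp)]
    simp only [hgdef, Sum.elim_inl, Sum.elim_inr, pow_one]
  have hint_m7 : ∀ i : Fin n, Integrable (fun ω => (r i ω)^2 * (s i ω * ((e i ω)^2 * f i ω))) P := by
    intro i
    rw [← hfun_m7 i]
    exact (masterG (Sum.elim (Sum.elim (fun _ => 2) (fun _ => 1)) (Sum.elim (fun _ => 2) (fun _ => 1))) ({Sum.inr (Sum.inl i), Sum.inr (Sum.inr i), Sum.inl (Sum.inl i), Sum.inl (Sum.inr i)} : Finset ((Fin n ⊕ Fin n) ⊕ (Fin n ⊕ Fin n)))).1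
  have hval_m7 : ∀ i : Fin n, ∫ ω, (r i ω)^2 * (s i ω * ((e i ω)^2 * f i ω)) ∂P = 0 := by
    intro i
    rw [← hfun_m7 i, (masterG (Sum.elim (Sum.elim (fun _ => 2) (fun _ => 1)) (Sum.elim (fun _ => 2) (fun _ => 1))) ({Sum.inr (Sum.inl i), Sum.inr (Sum.inr i), Sum.inl (Sum.inl i), Sum.inl (Sum.inr i)} : Finset ((Fin n ⊕ Fin n) ⊕ (Fin n ⊕ Fin n)))).2]
    rw [Finset.prod_insert (by simp), Finset.prod_insert (by simp), Finset.prod_pair (by simp)]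
    simp only [hgdef, Sum.elim_inl, Sum.elim_inr, pow_one]
    rw [key_f1 i]; ring
  have hfun_m8 : ∀ i : Fin n,
      (fun ω => ∏ k ∈ ({Sum.inr (Sum.inl i), Sum.inr (Sum.inr i), Sum.inl (Sum.inl i), Sum.inl (Sum.inr i)} : Finset ((Fin n ⊕ Fin n) ⊕ (Fin n ⊕ Fin n))), (g k ω) ^ ((Sum.elim (Sum.elim (fun _ => 1) (fun _ => 2)) (Sum.elim (fun _ => 1) (fun _ => 2))) k))
        = fun ω => r i ω * ((s i ω)^2 * (e i ω * (f i ω)^2)) := by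
    intro i; funext ω
    rw [Finset.prod_insert (by simp), Finset.prod_insert (by simp), Finset.prod_pair (by simp)]
    simp only [hgdef, Sum.elim_inl, Sum.elim_inr, pow_one]
  have hint_m8 : ∀ i : Fin n, Integrable (fun ω => r i ω * ((s i ω)^2 * (e i ω * (f i ω)^2))) P := by
    intro i
    rw [← hfun_m8 i]
    exact (masterG (Sum.elim (Sum.elim (fun _ => 1) (fun _ => 2)) (Sum.elim (fun _ => 1) (fun _ => 2))) ({Sum.inr (Sum.inl i), Sum.inr (Sum.inr i), Sum.inl (Sum.inl i), Sum.inl (Sum.inr i)} : Finset ((Fin n ⊕ Fin n) ⊕ (Fin n ⊕ Fin n)))).1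
  have hval_m8 : ∀ i : Fin n, ∫ ω, r i ω * ((s i ω)^2 * (e i ω * (f i ω)^2)) ∂P = 0 := by
    intro i
    rw [← hfun_m8 i, (masterG (Sum.elim (Sum.elim (fun _ => 1) (fun _ => 2)) (Sum.elim (fun _ => 1) (fun _ => 2))) ({Sum.inr (Sum.inl i), Sum.inr (Sum.inr i), Sum.inl (Sum.inl i), Sum.inl (Sum.inr i)} : Finset ((Fin n ⊕ Fin n) ⊕ (Fin n ⊕ Fin n)))).2]
    rw [Finset.prod_insert (by simp), Finset.prod_insert (by simp), Finset.prod_pair (by simp)]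
    simp only [hgdef, Sum.elim_inl, Sum.elim_inr, pow_one]
    rw [key_e1 i]; ring
  have intadd : ∀ {F G : Ω → ℝ}, Integrable F P → Integrable G P →
      Integrable (fun ω => F ω + G ω) P := fun hF hG => hF.add hG
  -- first and second moments of the per-index summand
  have hA1 : ∀ i : Fin n, ∫ ω, (r i ω * e i ω + s i ω * f i ω + r i ω * s i ω * e i ω * f i ω) ∂P = 0 := by
    intro i
    have hre : (fun ω => r i ω * e i ω + s i ω * f i ω + r i ω * s i ω * e i ω * f i ω)
        = fun ω => r i ω * e i ω + (s i ω * f i ω + r i ω * (s i ω * (e i ω * f i ω))) := by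
      funext ω; ring
    rw [hre, integral_add (hint_m1 i) (intadd (hint_m2 i) (hint_m3 i)),
      integral_add (hint_m2 i) (hint_m3 i), hval_m1 i, hval_m2 i, hval_m3 i]
    ring
  have hA2 : ∀ i : Fin n, ∫ ω, (r i ω * e i ω + s i ω * f i ω + r i ω * s i ω * e i ω * f i ω)^2 ∂P
      = 2*C*(W^2/12) + C^2*(W^2/12)^2 := by
    intro i
    have hsq : (fun ω => (r i ω * e i ω + s i ω * f i ω + r i ω * s i ω * e i ω * f i ω)^2)
        = fun ω => (r i ω)^2 * (e i ω)^2 + ((s i ω)^2 * (f i ω)^2 +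
            ((r i ω)^2 * ((s i ω)^2 * ((e i ω)^2 * (f i ω)^2)) +
             (2 * (r i ω * (s i ω * (e i ω * f i ω))) +
              (2 * ((r i ω)^2 * (s i ω * ((e i ω)^2 * f i ω))) +
               2 * (r i ω * ((s i ω)^2 * (e i ω * (f i ω)^2))))))) := by
      funext ω; ring
    rw [hsq,
      integral_add (hint_m4 i) (intadd (hint_m5 i) (intadd (hint_m6 i)
        (intadd ((hint_m3 i).const_mul 2) (intadd ((hint_m7 i).const_mul 2) ((hint_m8 i).const_mul 2))))),
      integral_add (hint_m5 i) (intadd (hint_m6 i)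
        (intadd ((hint_m3 i).const_mul 2) (intadd ((hint_m7 i).const_mul 2) ((hint_m8 i).const_mul 2)))),
      integral_add (hint_m6 i)
        (intadd ((hint_m3 i).const_mul 2) (intadd ((hint_m7 i).const_mul 2) ((hint_m8 i).const_mul 2))),
      integral_add ((hint_m3 i).const_mul 2) (intadd ((hint_m7 i).const_mul 2) ((hint_m8 i).const_mul 2)),
      integral_add ((hint_m7 i).const_mul 2) ((hint_m8 i).const_mul 2),
      integral_const_mul, integral_const_mul, integral_const_mul,
      hval_m3 i, hval_m4 i, hval_m5 i, hval_m6 i, hval_m7 i, hval_m8 i]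
    ring
  -- integrability and boundedness of summands
  have hmA : ∀ i : Fin n, Measurable (fun ω => r i ω * e i ω + s i ω * f i ω + r i ω * s i ω * e i ω * f i ω) :=
    fun i => (((hmr i).mul (hme i)).add ((hms i).mul (hmf i))).add
      ((((hmr i).mul (hms i)).mul (hme i)).mul (hmf i))
  have hbA : ∀ i : Fin n, ∀ᵐ ω ∂P, |r i ω * e i ω + s i ω * f i ω + r i ω * s i ω * e i ω * f i ω| ≤ W + W*W := by
    intro i
    filter_upwards [hBe i, hBf i, hBr i, hBs i] with ω h1 h2 h3 h4
    have k1 : |r i ω * e i ω| ≤ 1 * (W/2) := by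
      rw [abs_mul]; exact mul_le_mul h3 h1 (abs_nonneg _) one_pos.le
    have k2 : |s i ω * f i ω| ≤ 1 * (W/2) := by
      rw [abs_mul]; exact mul_le_mul h4 h2 (abs_nonneg _) one_pos.le
    have k4 : |r i ω * s i ω * e i ω| ≤ 1 * (W/2) := by
      rw [abs_mul, abs_mul]
      have : |r i ω| * |s i ω| ≤ 1 * 1 := mul_le_mul h3 h4 (abs_nonneg _) one_pos.le
      exact mul_le_mul (by linarith) h1 (abs_nonneg _) one_pos.le
    have k5 : |r i ω * s i ω * e i ω * f i ω| ≤ (1 * (W/2)) * (W/2) := by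
      rw [abs_mul]
      exact mul_le_mul k4 h2 (abs_nonneg _) (by positivity)
    calc |r i ω * e i ω + s i ω * f i ω + r i ω * s i ω * e i ω * f i ω|
        ≤ |r i ω * e i ω + s i ω * f i ω| + |r i ω * s i ω * e i ω * f i ω| := abs_add_le _ _
      _ ≤ |r i ω * e i ω| + |s i ω * f i ω| + |r i ω * s i ω * e i ω * f i ω| := by
          have := abs_add_le (r i ω * e i ω) (s i ω * f i ω); linarith
      _ ≤ W + W*W := by nlinarith [hW]
  have hAint : ∀ i : Fin n, Integrable (fun ω => r i ω * e i ω + s i ω * f i ω + r i ω * s i ω * e i ω * f i ω) P :=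
    fun i => aux_bdd_integrable (hmA i) (hbA i)
  have hAAint : ∀ i j : Fin n, Integrable (fun ω => (r i ω * e i ω + s i ω * f i ω + r i ω * s i ω * e i ω * f i ω) * (r j ω * e j ω + s j ω * f j ω + r j ω * s j ω * e j ω * f j ω)) P := by
    intro i j
    refine aux_bdd_integrable ((hmA i).mul (hmA j)) (c := (W + W*W) * (W + W*W)) ?_
    filter_upwards [hbA i, hbA j] with ω h1 h2
    rw [abs_mul]
    exact mul_le_mul h1 h2 (abs_nonneg _) (by nlinarith [hW])
  -- off-diagonal terms vanish
  have hoff : ∀ i j : Fin n, i ≠ j → ∫ ω, (r i ω * e i ω + s i ω * f i ω + r i ω * s i ω * e i ω * f i ω) * (r j ω * e j ω + s j ω * f j ω + r j ω * s j ω * e j ω * f j ω) ∂P = 0 := by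
    intro i j hij
    have hdisj : Disjoint
        ({Sum.inl (Sum.inl i), Sum.inl (Sum.inr i), Sum.inr (Sum.inl i), Sum.inr (Sum.inr i)} : Finset ((Fin n ⊕ Fin n) ⊕ (Fin n ⊕ Fin n)))
        ({Sum.inl (Sum.inl j), Sum.inl (Sum.inr j), Sum.inr (Sum.inl j), Sum.inr (Sum.inr j)} : Finset ((Fin n ⊕ Fin n) ⊕ (Fin n ⊕ Fin n))) := by
      simp [Finset.disjoint_left, hij]
    have hq := aux_indep_quad hg hindep'
      (Sum.inl (Sum.inl i)) (Sum.inl (Sum.inr i)) (Sum.inr (Sum.inl i)) (Sum.inr (Sum.inr i))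
      (Sum.inl (Sum.inl j)) (Sum.inl (Sum.inr j)) (Sum.inr (Sum.inl j)) (Sum.inr (Sum.inr j)) hdisj
    have hq2 : IndepFun (fun ω => r i ω * e i ω + s i ω * f i ω + r i ω * s i ω * e i ω * f i ω) (fun ω => r j ω * e j ω + s j ω * f j ω + r j ω * s j ω * e j ω * f j ω) P := hq
    have h3 := hq2.integral_mul_eq_mul_integral (hAint i).aestronglyMeasurable (hAint j).aestronglyMeasurable
    rw [show (fun ω => (r i ω * e i ω + s i ω * f i ω + r i ω * s i ω * e i ω * f i ω) * (r j ω * e j ω + s j ω * f j ω + r j ω * s j ω * e j ω * f j ω))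
        = (fun ω => r i ω * e i ω + s i ω * f i ω + r i ω * s i ω * e i ω * f i ω) * (fun ω => r j ω * e j ω + s j ω * f j ω + r j ω * s j ω * e j ω * f j ω) from rfl]
    rw [show (∫ ω, ((fun ω => r i ω * e i ω + s i ω * f i ω + r i ω * s i ω * e i ω * f i ω) * (fun ω => r j ω * e j ω + s j ω * f j ω + r j ω * s j ω * e j ω * f j ω)) ω ∂P)
        = ∫ ω, (fun ω => r i ω * e i ω + s i ω * f i ω + r i ω * s i ω * e i ω * f i ω) ω * (fun ω => r j ω * e j ω + s j ω * f j ω + r j ω * s j ω * e j ω * f j ω) ω ∂P from rfl] at h3 ⊢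
    rw [h3, hA1 i, zero_mul]
  -- assemble
  have hexpand : (fun ω => (∑ i, x i * y i * (r i ω * e i ω + s i ω * f i ω + r i ω * s i ω * e i ω * f i ω))^2)
      = fun ω => ∑ i, ∑ j, (x i * y i * (x j * y j)) * ((r i ω * e i ω + s i ω * f i ω + r i ω * s i ω * e i ω * f i ω) * (r j ω * e j ω + s j ω * f j ω + r j ω * s j ω * e j ω * f j ω)) := by
    funext ω
    rw [sq, Finset.sum_mul_sum]
    exact Finset.sum_congr rfl fun i _ => Finset.sum_congr rfl fun j _ => by ring
  rw [hexpand,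
    integral_finset_sum _ (fun i _ => integrable_finset_sum _ (fun j _ => (hAAint i j).const_mul _))]
  have hinner : ∀ i : Fin n,
      ∫ ω, ∑ j, (x i * y i * (x j * y j)) * ((r i ω * e i ω + s i ω * f i ω + r i ω * s i ω * e i ω * f i ω) * (r j ω * e j ω + s j ω * f j ω + r j ω * s j ω * e j ω * f j ω)) ∂P
        = (x i * y i)^2 * (2*C*(W^2/12) + C^2*(W^2/12)^2) := by
    intro i
    rw [integral_finset_sum _ (fun j _ => (hAAint i j).const_mul _)]
    simp_rw [integral_const_mul]
    rw [Finset.sum_eq_single i]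
    · have hAA : (fun ω => (r i ω * e i ω + s i ω * f i ω + r i ω * s i ω * e i ω * f i ω) * (r i ω * e i ω + s i ω * f i ω + r i ω * s i ω * e i ω * f i ω)) = fun ω => (r i ω * e i ω + s i ω * f i ω + r i ω * s i ω * e i ω * f i ω)^2 := by
        funext ω; rw [sq]
      rw [hAA, hA2 i]; ring
    · intro j _ hji
      rw [hoff i j (Ne.symm hji), mul_zero]
    · intro hmem
      exact absurd (Finset.mem_univ i) hmem
  rw [Finset.sum_congr rfl fun i _ => hinner i]
  have hpow2M : (2:ℝ)^(-(2*M:ℤ)) = W^2 := by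
    rw [hWdef, show (-(2*(M:ℤ))) = (-(M:ℤ))*2 by ring, zpow_mul, zpow_two, sq]
  rw [hpow2M, ← Finset.sum_mul,
    show (∑ i, (x i * y i)^2) = ∑ i, x i^2 * y i^2 from
      Finset.sum_congr rfl fun i _ => by ring]
  ring
end

section
/- Let λ_1,…,λ_n ≥ 0, Λ = diag(λ_1,…,λ_n), let V be a Haar-random orthogonal matrix in O(n), and set Σ = VᵀΛV. For k ∈ [n] let Σ^{(k)} be the k×k leading principal submatrix of Σ. Then 𝔼[ det Σ^{(k)} ] = (1/C(n,k)) · ∑_{S ⊆ [n], |S| = k} ∏_{i∈S} λ_i, i.e., the expected k-th leading principal minor equals the k-th elementary symmetric polynomial of the eigenvalues divided by the binomial coefficient C(n,k). -/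
open MeasureTheory ProbabilityTheory Matrix

/-- The `k × k` leading principal submatrix of an `n × n` matrix (`k ≤ n`). -/
def leadingMinor {n : ℕ} (A : Matrix (Fin n) (Fin n) ℝ) (k : ℕ) (hk : k ≤ n) :
    Matrix (Fin k) (Fin k) ℝ :=
  A.submatrix (Fin.castLE hk) (Fin.castLE hk)

namespace Stmt17Aux

open Finset


/-- determinant of the `k` rows of an `n × k` matrix indexed (in order) by `S`. -/
noncomputable def rdet {n k : ℕ} (A : Matrix (Fin n) (Fin k) ℝ) (S : Finset (Fin n)) : ℝ :=
  if h : S.card = k then (A.submatrix (S.orderEmbOfFin h) id).det else 0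

theorem image_orderEmbOfFin {n k : ℕ} (S : Finset (Fin n)) (h : S.card = k) :
    Finset.image (S.orderEmbOfFin h) Finset.univ = S := by
  apply Finset.eq_of_subset_of_card_le
  · intro x hx
    obtain ⟨j, _, rfl⟩ := Finset.mem_image.1 hx
    exact Finset.orderEmbOfFin_mem S h j
  · rw [Finset.card_image_of_injective _ (S.orderEmbOfFin h).injective, Finset.card_univ,
      Fintype.card_fin, h]

theorem cauchyBinet {n k : ℕ} (A : Matrix (Fin n) (Fin k) ℝ) (lam : Fin n → ℝ) :
    (Aᵀ * Matrix.diagonal lam * A).det =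
      ∑ S ∈ Finset.powersetCard k (Finset.univ : Finset (Fin n)),
        (∏ i ∈ S, lam i) * (rdet A S) ^ 2 := by
  classical
  have hent : ∀ a b, (Aᵀ * Matrix.diagonal lam * A) a b
      = ∑ i, A i a * (lam i * A i b) := by
    intro a b
    rw [Matrix.mul_apply]
    simp [Matrix.mul_diagonal, mul_assoc]
  have keyB : (Aᵀ * Matrix.diagonal lam * A).det
      = ∑ f : Fin k → Fin n,
          (∏ j, lam (f j) * A (f j) j) * (A.submatrix f id).det := by
    rw [Matrix.det_apply']
    simp_rw [hent, Finset.prod_univ_sum, Fintype.piFinset_univ, Finset.mul_sum]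
    rw [Finset.sum_comm]
    refine Finset.sum_congr rfl fun f _ => ?_
    rw [← Matrix.det_transpose (A.submatrix f id), Matrix.det_apply', Finset.mul_sum]
    refine Finset.sum_congr rfl fun σ _ => ?_
    rw [Finset.prod_mul_distrib]
    simp only [Matrix.transpose_apply, Matrix.submatrix_apply, id_eq]
    ring
  rw [keyB]
  -- kill non-injective f
  have hvan : ∀ f : Fin k → Fin n, ¬ Function.Injective f →
      (∏ j, lam (f j) * A (f j) j) * (A.submatrix f id).det = 0 := by
    intro f hf
    rw [Function.Injective] at hf
    push_neg at hf
    obtain ⟨i, j, hfij, hij⟩ := hf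
    rw [Matrix.det_zero_of_row_eq hij (by ext m; simp [hfij]), mul_zero]
  rw [← Finset.sum_filter_of_ne (p := fun f => Function.Injective f)
    (fun f _ h => by by_contra hinj; exact h (hvan f hinj))]
  -- partition by image
  rw [← Finset.sum_fiberwise_of_maps_to (g := fun f : Fin k → Fin n => Finset.image f Finset.univ)
      (t := Finset.powersetCard k (Finset.univ : Finset (Fin n)))
      (fun f hf => by
        rw [Finset.mem_powersetCard_univ,
          Finset.card_image_of_injective _ (Finset.mem_filter.1 hf).2, Finset.card_univ,
          Fintype.card_fin])]
  refine Finset.sum_congr rfl fun S hS => ?_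
  have h : S.card = k := Finset.mem_powersetCard_univ.1 hS
  set e := S.orderEmbOfFin h with he
  -- the fiber over S is the image of the permutations
  have hbij : ∑ f ∈ (Finset.univ.filter fun f : Fin k → Fin n => Function.Injective f).filter
        (fun f => Finset.image f Finset.univ = S),
        (∏ j, lam (f j) * A (f j) j) * (A.submatrix f id).det
      = ∑ σ : Equiv.Perm (Fin k),
        (∏ j, lam (e (σ j)) * A (e (σ j)) j) * (A.submatrix (fun j => e (σ j)) id).det := by
    refine (Finset.sum_bij (fun σ _ => fun j => e (σ j)) ?_ ?_ ?_ ?_).symm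
    · intro σ _
      simp only [Finset.mem_filter, Finset.mem_univ, true_and]
      constructor
      · exact e.injective.comp σ.injective
      · have : Finset.image (fun j => e (σ j)) Finset.univ
            = Finset.image (⇑e) (Finset.image (⇑σ) Finset.univ) := by
          rw [Finset.image_image]; rfl
        rw [this, Finset.image_univ_equiv, image_orderEmbOfFin S h]
    · intro σ _ τ _ hst
      exact Equiv.ext fun j => e.injective (congrFun hst j)
    · intro f hf
      have himg : Finset.image f Finset.univ = S := (Finset.mem_filter.1 hf).2
      have hinj : Function.Injective f :=
        (Finset.mem_filter.1 (Finset.mem_filter.1 hf).1).2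
      have hmem : ∀ j, f j ∈ S := fun j => by
        rw [← himg]; exact Finset.mem_image_of_mem f (Finset.mem_univ j)
      set σ0 : Fin k → Fin k := fun j => (S.orderIsoOfFin h).symm ⟨f j, hmem j⟩ with hσ0
      have hσ0inj : Function.Injective σ0 := by
        intro a b hab
        apply hinj
        have := congrArg (fun x => ((S.orderIsoOfFin h) x : Fin n)) hab
        simpa [hσ0] using this
      refine ⟨Equiv.ofBijective σ0 (Finite.injective_iff_bijective.mp hσ0inj),
        Finset.mem_univ _, ?_⟩
      funext j
      show e (σ0 j) = f j
      have : e (σ0 j) = ((S.orderIsoOfFin h) (σ0 j) : Fin n) := rfl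
      rw [this, hσ0]
      simp
    · intro σ _
      rfl
  rw [hbij]
  have hLam : ∀ σ : Equiv.Perm (Fin k), ∏ j, lam (e (σ j)) = ∏ i ∈ S, lam i := by
    intro σ
    rw [← image_orderEmbOfFin S h, Finset.prod_image
      (fun a _ b _ hab => e.injective hab)]
    exact Equiv.prod_comp σ fun j => lam (e j)
  have hDet : ∀ σ : Equiv.Perm (Fin k),
      (A.submatrix (fun j => e (σ j)) id).det
        = ((Equiv.Perm.sign σ : ℤ) : ℝ) * (A.submatrix (⇑e) id).det := by
    intro σ
    have : A.submatrix (fun j => e (σ j)) id = (A.submatrix (⇑e) id).submatrix σ id := by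
      ext a b; simp
    rw [this, Matrix.det_permute]
  calc ∑ σ : Equiv.Perm (Fin k),
        (∏ j, lam (e (σ j)) * A (e (σ j)) j) * (A.submatrix (fun j => e (σ j)) id).det
      = (∏ i ∈ S, lam i) * ((A.submatrix (⇑e) id).det *
          ∑ σ : Equiv.Perm (Fin k),
            ((Equiv.Perm.sign σ : ℤ) : ℝ) * ∏ j, A (e (σ j)) j) := by
        rw [Finset.mul_sum, Finset.mul_sum]
        refine Finset.sum_congr rfl fun σ _ => ?_
        rw [Finset.prod_mul_distrib, hLam σ, hDet σ]
        ring
    _ = (∏ i ∈ S, lam i) * rdet A S ^ 2 := by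
        have : ∑ σ : Equiv.Perm (Fin k), ((Equiv.Perm.sign σ : ℤ) : ℝ) * ∏ j, A (e (σ j)) j
            = (A.submatrix (⇑e) id).det := by
          rw [Matrix.det_apply']
          refine Finset.sum_congr rfl fun σ _ => ?_
          simp
        rw [this, rdet, dif_pos h]
        ring


variable {n k : ℕ}


def Wmat (hk : k ≤ n) (V : Fin n → Fin n → ℝ) : Matrix (Fin n) (Fin k) ℝ :=
  (Matrix.of V).submatrix id (Fin.castLE hk)

theorem leadingMinor_eq (hk : k ≤ n) (lam : Fin n → ℝ) (V : Fin n → Fin n → ℝ) :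
    leadingMinor ((Matrix.of V)ᵀ * Matrix.diagonal lam * Matrix.of V) k hk
      = (Wmat hk V)ᵀ * Matrix.diagonal lam * (Wmat hk V) := by
  ext a b
  simp [leadingMinor, Wmat, Matrix.mul_apply, Matrix.mul_diagonal]

noncomputable def F (hk : k ≤ n) (S : Finset (Fin n)) (V : Fin n → Fin n → ℝ) : ℝ :=
  rdet (Wmat hk V) S ^ 2

theorem measurable_F (hk : k ≤ n) (S : Finset (Fin n)) : Measurable (F hk S) := by
  have hc : Continuous fun V => rdet (Wmat hk V) S ^ 2 := by
    by_cases h : S.card = k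
    · simp only [rdet, dif_pos h]
      have : Continuous fun V : Fin n → Fin n → ℝ =>
          (Wmat hk V).submatrix (S.orderEmbOfFin h) id := by
        apply continuous_matrix
        intro i j
        exact (continuous_apply (Fin.castLE hk j)).comp
          (continuous_apply ((S.orderEmbOfFin h) i))
      exact (this.matrix_det).pow 2
    · simp only [rdet, dif_neg h]
      exact continuous_const.pow 2
  exact hc.measurable

theorem sumF_eq_one (hk : k ≤ n) (V : Fin n → Fin n → ℝ)
    (hV : Matrix.of V ∈ Matrix.orthogonalGroup (Fin n) ℝ) :
    ∑ S ∈ Finset.powersetCard k (Finset.univ : Finset (Fin n)), F hk S V = 1 := by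
  have h1 := cauchyBinet (Wmat hk V) (fun _ => (1 : ℝ))
  simp only [Finset.prod_const_one, one_mul] at h1
  have h2 : (Wmat hk V)ᵀ * (Matrix.diagonal (fun _ => (1:ℝ)) : Matrix (Fin n) (Fin n) ℝ) * (Wmat hk V)
      = leadingMinor ((Matrix.of V)ᵀ * Matrix.diagonal (fun _ => (1:ℝ)) * Matrix.of V) k hk :=
    (leadingMinor_eq hk _ V).symm
  rw [h2] at h1
  rw [Matrix.mem_orthogonalGroup_iff'] at hV
  have hVV : (Matrix.of V)ᵀ * Matrix.of V = 1 := by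
    rw [← hV]
  have h3 : (Matrix.of V)ᵀ * Matrix.diagonal (fun _ => (1:ℝ)) * Matrix.of V = 1 := by
    rw [Matrix.diagonal_one, Matrix.mul_one, hVV]
  rw [h3] at h1
  have h4 : leadingMinor (1 : Matrix (Fin n) (Fin n) ℝ) k hk = 1 := by
    rw [leadingMinor, Matrix.submatrix_one _ (Fin.castLE_injective hk)]
  rw [h4, Matrix.det_one] at h1
  simpa [F] using h1.symm

theorem integral_F_eq (hk : k ≤ n) (μ : Measure (Fin n → Fin n → ℝ)) [IsProbabilityMeasure μ]
    (hinv : ∀ Q : Matrix (Fin n) (Fin n) ℝ, Q ∈ Matrix.orthogonalGroup (Fin n) ℝ →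
      Measure.map (fun V : Fin n → Fin n → ℝ => Matrix.of.symm (Q * Matrix.of V)) μ = μ)
    (S T : Finset (Fin n)) (hS : S.card = k) (hT : T.card = k) :
    ∫ V, F hk S V ∂μ = ∫ V, F hk T V ∂μ := by
  classical
  -- a permutation of `Fin n` sending `S` (in order) to `T`
  have hcard : Fintype.card {x : Fin n // ¬ x ∈ S} = Fintype.card {x : Fin n // ¬ x ∈ T} := by
    rw [Fintype.card_subtype_compl, Fintype.card_subtype_compl]
    congr 1
    simp [hS, hT]
  let e₁ : {x : Fin n // x ∈ S} ≃ {x : Fin n // x ∈ T} :=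
    (S.orderIsoOfFin hS).toEquiv.symm.trans (T.orderIsoOfFin hT).toEquiv
  let e₂ : {x : Fin n // ¬ x ∈ S} ≃ {x : Fin n // ¬ x ∈ T} := Fintype.equivOfCardEq hcard
  let e : Equiv.Perm (Fin n) := Equiv.subtypeCongr e₁ e₂
  have hperm : ∀ j : Fin k, e (S.orderEmbOfFin hS j) = T.orderEmbOfFin hT j := by
    intro j
    have hm : (S.orderEmbOfFin hS j) ∈ S := Finset.orderEmbOfFin_mem S hS j
    show Equiv.subtypeCongr e₁ e₂ _ = _
    rw [Equiv.subtypeCongr, Equiv.trans_apply, Equiv.trans_apply,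
      Equiv.sumCompl_symm_apply_of_pos hm]
    simp only [Equiv.sumCongr_apply, Sum.map_inl, Equiv.sumCompl_apply_inl]
    have h1 : (⟨S.orderEmbOfFin hS j, hm⟩ : {x : Fin n // x ∈ S}) = S.orderIsoOfFin hS j :=
      Subtype.ext rfl
    simp only [e₁, Equiv.trans_apply, h1]
    simp
  set Q : Matrix (Fin n) (Fin n) ℝ := (1 : Matrix (Fin n) (Fin n) ℝ).submatrix e id with hQ
  have hQmul : ∀ M : Matrix (Fin n) (Fin n) ℝ, Q * M = M.submatrix (⇑e) id := by
    intro M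
    ext i j
    simp [hQ, Matrix.mul_apply, Matrix.one_apply]
  have hQorth : Q ∈ Matrix.orthogonalGroup (Fin n) ℝ := by
    rw [Matrix.mem_orthogonalGroup_iff]
    ext i j
    by_cases hij : i = j
    · subst hij
      simp [hQ, Matrix.mul_apply, Matrix.one_apply, Matrix.star_apply]
    · simp [hQ, Matrix.mul_apply, Matrix.one_apply, Matrix.star_apply, hij,
        (e.injective.ne hij : e i ≠ e j)]
  set φ : (Fin n → Fin n → ℝ) → (Fin n → Fin n → ℝ) :=
    fun V => Matrix.of.symm (Q * Matrix.of V) with hφ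
  have hφmeas : Measurable φ := by
    apply measurable_pi_lambda
    intro i
    apply measurable_pi_lambda
    intro j
    have : (fun V : Fin n → Fin n → ℝ => φ V i j)
        = fun V => ∑ m, Q i m * V m j := by
      funext V
      simp [hφ, Matrix.mul_apply]
    rw [this]
    refine Finset.measurable_sum _ fun m _ => ?_
    have hm2 : Measurable fun V : Fin n → Fin n → ℝ => V m j :=
      (measurable_pi_apply m).eval
    exact hm2.const_mul (Q i m)
  have hcomp : ∀ V, F hk S (φ V) = F hk T V := by
    intro V
    simp only [F, rdet, dif_pos hS, dif_pos hT]
    congr 2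
    ext a b
    simp only [Wmat, Matrix.submatrix_apply, id_eq, hφ]
    show (Q * Matrix.of V) (S.orderEmbOfFin hS a) (Fin.castLE hk b) = _
    rw [hQmul]
    simp [hperm a]
  calc ∫ V, F hk S V ∂μ
      = ∫ V, F hk S V ∂(Measure.map φ μ) := by rw [hinv Q hQorth]
    _ = ∫ V, F hk S (φ V) ∂μ :=
        integral_map hφmeas.aemeasurable (measurable_F hk S).aestronglyMeasurable
    _ = ∫ V, F hk T V ∂μ := by
        exact integral_congr_ae (Filter.Eventually.of_forall fun V => hcomp V)


end Stmt17Aux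

open Stmt17Aux in
/-- Let `λ₁,…,λₙ ≥ 0`, `Λ = diag(λ)`, let `V` be Haar-random on `O(n)`
(law: a probability measure concentrated on the orthogonal group, invariant under left
multiplication by any orthogonal matrix) and `Σ = Vᵀ Λ V`.  Then for `k ∈ [n]`,
`𝔼[det Σ^{(k)}] = (1/C(n,k)) ∑_{|S|=k} ∏_{i∈S} λᵢ`. -/

theorem stmt_17 (n : ℕ) (lam : Fin n → ℝ) (hlam : ∀ i, 0 ≤ lam i)
    (μ : Measure (Fin n → Fin n → ℝ)) [IsProbabilityMeasure μ]
    (hsupp : ∀ᵐ V ∂μ, Matrix.of V ∈ Matrix.orthogonalGroup (Fin n) ℝ)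
    (hinv : ∀ Q : Matrix (Fin n) (Fin n) ℝ, Q ∈ Matrix.orthogonalGroup (Fin n) ℝ →
      Measure.map (fun V : Fin n → Fin n → ℝ => Matrix.of.symm (Q * Matrix.of V)) μ = μ)
    (k : ℕ) (hk1 : 1 ≤ k) (hk : k ≤ n) :
    (∫ V : Fin n → Fin n → ℝ,
        (leadingMinor ((Matrix.of V)ᵀ * Matrix.diagonal lam * Matrix.of V) k hk).det ∂μ)
      = (1 / (n.choose k : ℝ)) *
          ∑ S ∈ Finset.powersetCard k (Finset.univ : Finset (Fin n)), ∏ i ∈ S, lam i := by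
  classical
  set 𝒮 := Finset.powersetCard k (Finset.univ : Finset (Fin n)) with h𝒮
  have hae : ∀ᵐ V ∂μ, ∑ S ∈ 𝒮, F hk S V = 1 :=
    hsupp.mono fun V hV => sumF_eq_one hk V hV
  have hbound : ∀ S ∈ 𝒮, ∀ᵐ V ∂μ, ‖F hk S V‖ ≤ 1 := by
    intro S hS
    refine hae.mono fun V hV => ?_
    have hnn : ∀ T ∈ 𝒮, (0:ℝ) ≤ F hk T V := fun T _ => sq_nonneg _
    have hle := Finset.single_le_sum hnn hS
    rw [Real.norm_eq_abs, abs_of_nonneg (hnn S hS)]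
    exact hle.trans hV.le
  have hint : ∀ S ∈ 𝒮, Integrable (F hk S) μ := fun S hS =>
    Integrable.mono' (integrable_const 1)
      (measurable_F hk S).aestronglyMeasurable (hbound S hS)
  have hsum_int : ∑ S ∈ 𝒮, ∫ V, F hk S V ∂μ = 1 := by
    rw [← integral_finset_sum 𝒮 hint, integral_congr_ae hae]
    simp
  have hccard : 𝒮.card = n.choose k := by
    simp [h𝒮, Finset.card_powersetCard]
  have hchoose : (0:ℝ) < (n.choose k : ℝ) := by
    exact_mod_cast Nat.choose_pos hk
  have hconst : ∀ S ∈ 𝒮, ∫ V, F hk S V ∂μ = 1 / (n.choose k : ℝ) := by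
    intro S hS
    have hall : ∀ T ∈ 𝒮, ∫ V, F hk T V ∂μ = ∫ V, F hk S V ∂μ := fun T hT =>
      integral_F_eq hk μ hinv T S (Finset.mem_powersetCard_univ.1 hT)
        (Finset.mem_powersetCard_univ.1 hS)
    rw [Finset.sum_congr rfl hall, Finset.sum_const, hccard, nsmul_eq_mul] at hsum_int
    rw [eq_div_iff hchoose.ne']
    linarith [hsum_int]
  have hrw : ∀ V, (leadingMinor ((Matrix.of V)ᵀ * Matrix.diagonal lam * Matrix.of V) k hk).det
      = ∑ S ∈ 𝒮, (∏ i ∈ S, lam i) * F hk S V := fun V => by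
    rw [leadingMinor_eq hk lam V, cauchyBinet]; rfl
  calc (∫ V : Fin n → Fin n → ℝ,
        (leadingMinor ((Matrix.of V)ᵀ * Matrix.diagonal lam * Matrix.of V) k hk).det ∂μ)
      = ∫ V, ∑ S ∈ 𝒮, (∏ i ∈ S, lam i) * F hk S V ∂μ :=
        integral_congr_ae (Filter.Eventually.of_forall fun V => hrw V)
    _ = ∑ S ∈ 𝒮, ∫ V, (∏ i ∈ S, lam i) * F hk S V ∂μ :=
        integral_finset_sum _ (fun S hS => (hint S hS).const_mul _)
    _ = ∑ S ∈ 𝒮, (∏ i ∈ S, lam i) * (1 / (n.choose k : ℝ)) := by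
        refine Finset.sum_congr rfl fun S hS => ?_
        rw [integral_const_mul, hconst S hS]
    _ = (1 / (n.choose k : ℝ)) * ∑ S ∈ 𝒮, ∏ i ∈ S, lam i := by
        rw [Finset.mul_sum]
        exact Finset.sum_congr rfl fun _ _ => mul_comm _ _
end
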